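/- arXiv:1607.07370 — 10 statements merged into one kernel-verified Lean document; each statement's English description precedes it below -/
import Mathlib

section
/- Let ζ > 0 and let f, g : ℝ → ℝ be of class C⁶ on [0,1], both satisfying the beam boundary conditions. Then ∫₀¹ (f⁽⁴⁾(x) − ζ f⁽⁶⁾(x)) g(x) dx = ∫₀¹ f(x) (g⁽⁴⁾(x) − ζ g⁽⁶⁾(x)) dx; that is, the beam operator A₀f = f⁽⁴⁾ − ζ f⁽⁶⁾ is symmetric with respect to the L²(0,1) inner product on functions satisfying the beam boundary conditions. -/
open Set MeasureTheory intervalIntegral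

/-- `Dv m f x` is the `m`-th derivative of `f` on the interval `[0,1]`. -/
noncomputable def Dv (m : ℕ) (f : ℝ → ℝ) (x : ℝ) : ℝ :=
  iteratedDerivWithin m f (Icc (0:ℝ) 1) x

/-- The beam boundary conditions. -/
def BeamBC (ζ : ℝ) (f : ℝ → ℝ) : Prop :=
  f 0 = 0 ∧ Dv 1 f 0 = 0 ∧ Dv 2 f 0 = 0 ∧
  Dv 2 f 1 - ζ * Dv 4 f 1 = 0 ∧
  ζ * Dv 5 f 1 - Dv 3 f 1 = 0 ∧
  ζ * Dv 3 f 1 = 0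

/-- An eigenpair `(μ, φ)` of the beam problem. -/
def BeamEigenpair (ζ μ : ℝ) (φ : ℝ → ℝ) : Prop :=
  ContDiffOn ℝ 6 φ (Icc (0:ℝ) 1) ∧ BeamBC ζ φ ∧
  (¬ ∀ x ∈ Icc (0:ℝ) 1, φ x = 0) ∧
  (∀ x ∈ Icc (0:ℝ) 1, Dv 4 φ x - ζ * Dv 6 φ x = μ * φ x)


lemma Dv_contOn {f : ℝ → ℝ} {m : ℕ} (hf : ContDiffOn ℝ 6 f (Icc (0:ℝ) 1)) (hm : m ≤ 6) :
    ContinuousOn (Dv m f) (Icc (0:ℝ) 1) :=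
  hf.continuousOn_iteratedDerivWithin (by exact_mod_cast hm) (uniqueDiffOn_Icc one_pos)

lemma Dv_hasDerivAt {f : ℝ → ℝ} {m : ℕ} (hf : ContDiffOn ℝ 6 f (Icc (0:ℝ) 1)) (hm : m < 6)
    {x : ℝ} (hx : x ∈ Ioo (0:ℝ) 1) : HasDerivAt (Dv m f) (Dv (m+1) f x) x := by
  have hx' : x ∈ Icc (0:ℝ) 1 := Ioo_subset_Icc_self hx
  have hd : DifferentiableOn ℝ (iteratedDerivWithin m f (Icc (0:ℝ) 1)) (Icc (0:ℝ) 1) :=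
    hf.differentiableOn_iteratedDerivWithin (by exact_mod_cast hm) (uniqueDiffOn_Icc one_pos)
  have h1 : HasDerivWithinAt (Dv m f) (derivWithin (Dv m f) (Icc (0:ℝ) 1) x) (Icc (0:ℝ) 1) x :=
    (hd x hx').hasDerivWithinAt
  have h2 : derivWithin (Dv m f) (Icc (0:ℝ) 1) x = Dv (m+1) f x := by
    rw [Dv, iteratedDerivWithin_succ]; rfl
  rw [h2] at h1
  exact h1.hasDerivAt (Icc_mem_nhds hx.1 hx.2)

lemma Dv_int {f g : ℝ → ℝ} {m k : ℕ} (hf : ContDiffOn ℝ 6 f (Icc (0:ℝ) 1))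
    (hg : ContDiffOn ℝ 6 g (Icc (0:ℝ) 1)) (hm : m ≤ 6) (hk : k ≤ 6) :
    IntervalIntegrable (fun x => Dv m f x * Dv k g x) volume 0 1 :=
  ContinuousOn.intervalIntegrable (by
    rw [uIcc_of_le (by norm_num : (0:ℝ) ≤ 1)]
    exact (Dv_contOn hf hm).mul (Dv_contOn hg hk))

lemma ibp' {f g : ℝ → ℝ} (hf : ContDiffOn ℝ 6 f (Icc (0:ℝ) 1))
    (hg : ContDiffOn ℝ 6 g (Icc (0:ℝ) 1)) {m k : ℕ} (hm : m + 1 ≤ 6) (hk : k + 1 ≤ 6) :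
    ∫ x in (0:ℝ)..1, Dv (m+1) f x * Dv k g x
      = Dv m f 1 * Dv k g 1 - Dv m f 0 * Dv k g 0
        - ∫ x in (0:ℝ)..1, Dv m f x * Dv (k+1) g x := by
  have hm' : m < 6 := Nat.lt_of_succ_le hm
  have hk' : k < 6 := Nat.lt_of_succ_le hk
  have hiu := Dv_int hf hg hm (Nat.le_of_succ_le hk)
  have hiv := Dv_int hf hg (Nat.le_of_succ_le hm) hk
  have hcont : ContinuousOn (fun x => Dv m f x * Dv k g x) (Icc (0:ℝ) 1) :=
    (Dv_contOn hf (Nat.le_of_succ_le hm)).mul (Dv_contOn hg (Nat.le_of_succ_le hk))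
  have key : ∫ x in (0:ℝ)..1, (Dv (m+1) f x * Dv k g x + Dv m f x * Dv (k+1) g x)
      = Dv m f 1 * Dv k g 1 - Dv m f 0 * Dv k g 0 := by
    apply integral_eq_sub_of_hasDeriv_right_of_le (by norm_num : (0:ℝ) ≤ 1) hcont
    · intro x hx
      exact (((Dv_hasDerivAt hf hm' hx).mul (Dv_hasDerivAt hg hk' hx))).hasDerivWithinAt
    · exact hiu.add hiv
  rw [intervalIntegral.integral_add hiu hiv] at key
  linarith

lemma Dv_zero (g : ℝ → ℝ) : Dv 0 g = g := by
  funext x; simp [Dv]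

lemma beam_sym (ζ : ℝ) (f g : ℝ → ℝ)
    (hf : ContDiffOn ℝ 6 f (Icc (0:ℝ) 1)) (hg : ContDiffOn ℝ 6 g (Icc (0:ℝ) 1))
    (hbf : BeamBC ζ f) (hbg : BeamBC ζ g) :
    ∫ x in (0:ℝ)..1, (Dv 4 f x - ζ * Dv 6 f x) * g x
      = (∫ x in (0:ℝ)..1, Dv 2 f x * Dv 2 g x)
        + ζ * ∫ x in (0:ℝ)..1, Dv 3 f x * Dv 3 g x := by
  obtain ⟨z0, z1, z2, -, -, -⟩ := hbg
  obtain ⟨-, -, -, bc4, bc5, bc6⟩ := hbf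
  have e1 := ibp' hf hg (m := 3) (k := 0) (by norm_num) (by norm_num)
  have e2 := ibp' hf hg (m := 2) (k := 1) (by norm_num) (by norm_num)
  have e3 := ibp' hf hg (m := 5) (k := 0) (by norm_num) (by norm_num)
  have e4 := ibp' hf hg (m := 4) (k := 1) (by norm_num) (by norm_num)
  have e5 := ibp' hf hg (m := 3) (k := 2) (by norm_num) (by norm_num)
  rw [Dv_zero] at e1 e3
  norm_num at e1 e2 e3 e4 e5
  have hsplit : ∫ x in (0:ℝ)..1, (Dv 4 f x - ζ * Dv 6 f x) * g x
      = (∫ x in (0:ℝ)..1, Dv 4 f x * g x) - ζ * ∫ x in (0:ℝ)..1, Dv 6 f x * g x := by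
    have i4 := Dv_int hf hg (m := 4) (k := 0) (by norm_num) (by norm_num)
    have i6 := Dv_int hf hg (m := 6) (k := 0) (by norm_num) (by norm_num)
    rw [Dv_zero] at i4 i6
    rw [← intervalIntegral.integral_const_mul, ← intervalIntegral.integral_sub i4 (i6.const_mul ζ)]
    congr 1; funext x; ring
  rw [hsplit]
  linear_combination e1 - e2 - ζ*e3 + ζ*e4 - ζ*e5 - g 1 * bc5 - Dv 1 g 1 * bc4 - Dv 2 g 1 * bc6
    - (Dv 3 f 0 - ζ * Dv 5 f 0) * z0 - (ζ * Dv 4 f 0 - Dv 2 f 0) * z1 + ζ * Dv 3 f 0 * z2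

/-- The beam operator `A₀ f = f⁽⁴⁾ − ζ f⁽⁶⁾` is symmetric with respect to the
`L²(0,1)` inner product on functions satisfying the beam boundary conditions. -/
theorem stmt_1 (ζ : ℝ) (hζ : 0 < ζ) (f g : ℝ → ℝ)
    (hf : ContDiffOn ℝ 6 f (Icc (0:ℝ) 1)) (hg : ContDiffOn ℝ 6 g (Icc (0:ℝ) 1))
    (hbf : BeamBC ζ f) (hbg : BeamBC ζ g) :
    ∫ x in (0:ℝ)..1, (Dv 4 f x - ζ * Dv 6 f x) * g x
      = ∫ x in (0:ℝ)..1, f x * (Dv 4 g x - ζ * Dv 6 g x) := by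
  have h1 := beam_sym ζ f g hf hg hbf hbg
  have h2 := beam_sym ζ g f hg hf hbg hbf
  have hr : ∫ x in (0:ℝ)..1, f x * (Dv 4 g x - ζ * Dv 6 g x)
      = ∫ x in (0:ℝ)..1, (Dv 4 g x - ζ * Dv 6 g x) * f x := by
    congr 1; funext x; ring
  rw [h1, hr, h2]
  have c2 : ∫ x in (0:ℝ)..1, Dv 2 f x * Dv 2 g x
      = ∫ x in (0:ℝ)..1, Dv 2 g x * Dv 2 f x := by congr 1; funext x; ring
  have c3 : ∫ x in (0:ℝ)..1, Dv 3 f x * Dv 3 g x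
      = ∫ x in (0:ℝ)..1, Dv 3 g x * Dv 3 f x := by congr 1; funext x; ring
  rw [c2, c3]
end

section
/- Let ζ > 0 and let f : ℝ → ℝ be of class C⁶ on [0,1] satisfying the beam boundary conditions. If f⁽⁴⁾(x) − ζ f⁽⁶⁾(x) = 0 for all x ∈ [0,1], then f(x) = 0 for all x ∈ [0,1]; that is, the beam operator A₀f = f⁽⁴⁾ − ζ f⁽⁶⁾ is injective on functions satisfying the beam boundary conditions. -/
open Set MeasureTheory intervalIntegral

/-- The beam operator `A₀ f = f⁽⁴⁾ − ζ f⁽⁶⁾` is injective on functions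
satisfying the beam boundary conditions. -/
theorem stmt_3 (ζ : ℝ) (hζ : 0 < ζ) (f : ℝ → ℝ)
    (hf : ContDiffOn ℝ 6 f (Icc (0:ℝ) 1)) (hbf : BeamBC ζ f)
    (hode : ∀ x ∈ Icc (0:ℝ) 1, Dv 4 f x - ζ * Dv 6 f x = 0) :
    ∀ x ∈ Icc (0:ℝ) 1, f x = 0 := by
  obtain ⟨hb0, hb1, hb2, hb3, hb4, hb5⟩ := hbf
  have hs : UniqueDiffOn ℝ (Icc (0:ℝ) 1) := uniqueDiffOn_Icc zero_lt_one
  have hder : ∀ m : ℕ, m + 1 ≤ 6 → ∀ x ∈ Icc (0:ℝ) 1,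
      HasDerivWithinAt (Dv m f) (Dv (m+1) f x) (Icc (0:ℝ) 1) x := by
    intro m hm x hx
    have hd : DifferentiableOn ℝ (iteratedDerivWithin m f (Icc (0:ℝ) 1)) (Icc (0:ℝ) 1) :=
      hf.differentiableOn_iteratedDerivWithin (by exact_mod_cast hm) hs
    have h := (hd x hx).hasDerivWithinAt
    rwa [show derivWithin (iteratedDerivWithin m f (Icc (0:ℝ) 1)) (Icc (0:ℝ) 1) x
        = Dv (m+1) f x from (congrFun iteratedDerivWithin_succ x).symm] at h
  have hcont : ∀ m : ℕ, m ≤ 6 → ContinuousOn (Dv m f) (Icc (0:ℝ) 1) := by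
    intro m hm
    exact hf.continuousOn_iteratedDerivWithin (by exact_mod_cast hm) hs
  have hDv3_1 : Dv 3 f 1 = 0 := by
    have h := mul_eq_zero.mp hb5
    rcases h with h | h
    · exact absurd h hζ.ne'
    · exact h
  -- Step A : ζ * Dv 5 f = Dv 3 f on Icc
  have stepA : ∀ x ∈ Icc (0:ℝ) 1, ζ * Dv 5 f x - Dv 3 f x = 0 := by
    set u : ℝ → ℝ := fun x => ζ * Dv 5 f x - Dv 3 f x with hu
    have hud : ∀ x ∈ Icc (0:ℝ) 1, HasDerivWithinAt u 0 (Icc (0:ℝ) 1) x := by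
      intro x hx
      have h := ((hder 5 (by norm_num) x hx).const_mul ζ).sub (hder 3 (by norm_num) x hx)
      have he : ζ * Dv 6 f x - Dv 4 f x = 0 := by linarith [hode x hx]
      rwa [he] at h
    have hconst : ∀ x ∈ Icc (0:ℝ) 1, u x = u 0 := by
      apply constant_of_derivWithin_zero
      · intro x hx; exact (hud x hx).differentiableWithinAt
      · intro x hx
        exact (hud x (mem_Icc_of_Ico hx)).derivWithin (hs x (mem_Icc_of_Ico hx))
    have h1 : u 1 = u 0 := hconst 1 (by norm_num)
    have h10 : u 1 = 0 := hb4
    intro x hx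
    rw [show (ζ * Dv 5 f x - Dv 3 f x) = u x from rfl, hconst x hx, ← h1, h10]
  -- Step B : ζ * Dv 4 f = Dv 2 f on Icc
  have stepB : ∀ x ∈ Icc (0:ℝ) 1, ζ * Dv 4 f x - Dv 2 f x = 0 := by
    set v : ℝ → ℝ := fun x => ζ * Dv 4 f x - Dv 2 f x with hv
    have hvd : ∀ x ∈ Icc (0:ℝ) 1, HasDerivWithinAt v 0 (Icc (0:ℝ) 1) x := by
      intro x hx
      have h := ((hder 4 (by norm_num) x hx).const_mul ζ).sub (hder 2 (by norm_num) x hx)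
      rwa [stepA x hx] at h
    have hconst : ∀ x ∈ Icc (0:ℝ) 1, v x = v 0 := by
      apply constant_of_derivWithin_zero
      · intro x hx; exact (hvd x hx).differentiableWithinAt
      · intro x hx
        exact (hvd x (mem_Icc_of_Ico hx)).derivWithin (hs x (mem_Icc_of_Ico hx))
    have h1 : v 1 = v 0 := hconst 1 (by norm_num)
    have h10 : v 1 = 0 := by simp only [hv]; linarith [hb3]
    intro x hx
    rw [show (ζ * Dv 4 f x - Dv 2 f x) = v x from rfl, hconst x hx, ← h1, h10]
  -- Energy identity
  set φ : ℝ → ℝ := fun x => Dv 3 f x ^ 2 + Dv 2 f x ^ 2 / ζ with hφ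
  have hφcont : ContinuousOn φ (Icc (0:ℝ) 1) :=
    ((hcont 3 (by norm_num)).pow 2).add (((hcont 2 (by norm_num)).pow 2).div_const ζ)
  have hφnn : ∀ x, 0 ≤ φ x := fun x =>
    add_nonneg (sq_nonneg _) (div_nonneg (sq_nonneg _) hζ.le)
  have hφint : IntervalIntegrable φ volume 0 1 :=
    (hφcont.mono (by rw [uIcc_of_le (zero_le_one)])).intervalIntegrable
  have hInt : ∫ x in (0:ℝ)..1, φ x = 0 := by
    have hF : ∀ x ∈ Ioo (0:ℝ) 1, HasDerivWithinAt (fun y => Dv 2 f y * Dv 3 f y)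
        (φ x) (Ioi x) x := by
      intro x hx
      have hx' : x ∈ Icc (0:ℝ) 1 := Ioo_subset_Icc_self hx
      have h := (hder 2 (by norm_num) x hx').mul (hder 3 (by norm_num) x hx')
      have hmem : Icc (0:ℝ) 1 ∈ nhds x := Icc_mem_nhds hx.1 hx.2
      have h' := (h.hasDerivAt hmem).hasDerivWithinAt (s := Ioi x)
      have he : Dv 3 f x * Dv 3 f x + Dv 2 f x * Dv 4 f x = φ x := by
        have h4 : Dv 4 f x = Dv 2 f x / ζ := by
          have := stepB x hx'; field_simp at this ⊢; linarith
        rw [h4, hφ]; ring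
      rwa [he] at h'
    have hFc : ContinuousOn (fun y => Dv 2 f y * Dv 3 f y) (Icc (0:ℝ) 1) :=
      (hcont 2 (by norm_num)).mul (hcont 3 (by norm_num))
    have := integral_eq_sub_of_hasDeriv_right_of_le zero_le_one hFc hF hφint
    rw [this, hDv3_1, hb2]; ring
  -- φ = 0 a.e., hence Dv 2 f = 0 on Ioo
  have hae : ∀ᵐ x ∂(volume : Measure ℝ), x ∈ Ioc (0:ℝ) 1 → φ x = 0 := by
    have h := (integral_eq_zero_iff_of_le_of_nonneg_ae zero_le_one
      (Filter.Eventually.of_forall fun x => hφnn x) hφint).mp hInt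
    exact (ae_restrict_iff' measurableSet_Ioc).mp h
  have hD2Ioo : ∀ x ∈ Ioo (0:ℝ) 1, Dv 2 f x = 0 := by
    intro x hx
    by_contra hne
    have hpos : 0 < φ x := by
      have : 0 < Dv 2 f x ^ 2 / ζ := div_pos (by positivity) hζ
      have := add_pos_of_nonneg_of_pos (sq_nonneg (Dv 3 f x)) this
      exact this
    have hca : ContinuousAt φ x :=
      (hφcont x (Ioo_subset_Icc_self hx)).continuousAt (Icc_mem_nhds hx.1 hx.2)
    have hnb : {y | 0 < φ y} ∈ nhds x := hca.preimage_mem_nhds (Ioi_mem_nhds hpos)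
    have hnb2 : ({y | 0 < φ y} ∩ Ioo 0 1) ∈ nhds x :=
      Filter.inter_mem hnb (Ioo_mem_nhds hx.1 hx.2)
    obtain ⟨a, b, hab, hsub⟩ := mem_nhds_iff_exists_Ioo_subset.mp hnb2
    have hsub' : Ioo a b ⊆ {y | ¬ (y ∈ Ioc (0:ℝ) 1 → φ y = 0)} := by
      intro y hy
      obtain ⟨hy1, hy2⟩ := hsub hy
      intro h
      exact (show 0 < φ y from hy1).ne' (h ⟨hy2.1, hy2.2.le⟩)
    have h0 : volume {y | ¬ (y ∈ Ioc (0:ℝ) 1 → φ y = 0)} = 0 := hae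
    have := measure_mono_null hsub' h0
    rw [Real.volume_Ioo] at this
    have : b ≤ a := by
      by_contra hba
      push_neg at hba
      simp [ENNReal.ofReal_eq_zero, sub_nonpos] at this
      linarith
    exact absurd (hab.1.trans hab.2) (not_lt.mpr this)
  have hD2 : ∀ x ∈ Ico (0:ℝ) 1, Dv 2 f x = 0 := by
    intro x hx
    rcases eq_or_lt_of_le hx.1 with h | h
    · rw [← h]; exact hb2
    · exact hD2Ioo x ⟨h, hx.2⟩
  -- Dv 1 f = 0 on Icc
  have hD1 : ∀ x ∈ Icc (0:ℝ) 1, Dv 1 f x = 0 := by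
    have hconst : ∀ x ∈ Icc (0:ℝ) 1, Dv 1 f x = Dv 1 f 0 := by
      apply constant_of_derivWithin_zero
      · exact hf.differentiableOn_iteratedDerivWithin (by norm_num) hs
      · intro x hx
        have h := (hder 1 (by norm_num) x (mem_Icc_of_Ico hx)).derivWithin
          (hs x (mem_Icc_of_Ico hx))
        rw [h]; exact hD2 x hx
    intro x hx; rw [hconst x hx, hb1]
  -- f = 0 on Icc
  have hconst : ∀ x ∈ Icc (0:ℝ) 1, f x = f 0 := by
    apply constant_of_derivWithin_zero
    · exact hf.differentiableOn (by norm_num)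
    · intro x hx
      have hx' := mem_Icc_of_Ico hx
      have h1 : Dv 1 f x = derivWithin f (Icc (0:ℝ) 1) x := congrFun iteratedDerivWithin_one x
      rw [← h1]; exact hD1 x hx'
  intro x hx; rw [hconst x hx, hb0]
end

section
/- Let ζ > 0. For every continuous function h : [0,1] → ℝ there exists a function f : ℝ → ℝ of class C⁶ on [0,1] satisfying the beam boundary conditions such that f⁽⁴⁾(x) − ζ f⁽⁶⁾(x) = h(x) for all x ∈ [0,1]; that is, the beam operator A₀f = f⁽⁴⁾ − ζ f⁽⁶⁾ with the beam boundary conditions is surjective onto continuous right-hand sides. -/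
open Set MeasureTheory intervalIntegral

noncomputable section
namespace Beam

/-- primitive -/
def P (g : ℝ → ℝ) (a x : ℝ) : ℝ := ∫ t in a..x, g t

lemma hasDerivAt_P {g : ℝ → ℝ} (hg : Continuous g) (a x : ℝ) :
    HasDerivAt (P g a) (g x) x :=
  (hg.integral_hasStrictDerivAt a x).hasDerivAt

lemma continuous_P {g : ℝ → ℝ} (hg : Continuous g) (a : ℝ) : Continuous (P g a) := by
  have : Differentiable ℝ (P g a) := fun x => (hasDerivAt_P hg a x).differentiableAt
  exact this.continuous

lemma P_same (g : ℝ → ℝ) (a : ℝ) : P g a a = 0 := intervalIntegral.integral_same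

variable (H : ℝ → ℝ) (k A : ℝ)

def W1 : ℝ → ℝ := P H 1
def w : ℝ → ℝ := P (W1 H) 1
def Cc : ℝ → ℝ := P (fun s => Real.cosh (k*s) * w H s) 0
def Ss : ℝ → ℝ := P (fun s => Real.sinh (k*s) * w H s) 0
def v (x : ℝ) : ℝ :=
  A * Real.sinh (k*x) - k * (Real.sinh (k*x) * Cc H k x - Real.cosh (k*x) * Ss H k x)
def v' (x : ℝ) : ℝ :=
  A * k * Real.cosh (k*x) - k^2 * (Real.cosh (k*x) * Cc H k x - Real.sinh (k*x) * Ss H k x)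
def F4 (x : ℝ) : ℝ := k^2 * (v H k A x - w H x)
def F5 (x : ℝ) : ℝ := k^2 * (v' H k A x - W1 H x)
def F6 (x : ℝ) : ℝ := k^2 * (F4 H k A x - H x)
def f1 : ℝ → ℝ := P (v H k A) 0
def f : ℝ → ℝ := P (f1 H k A) 0

/-- the chain of derivatives -/
def Fc : ℕ → ℝ → ℝ
  | 0 => f H k A
  | 1 => f1 H k A
  | 2 => v H k A
  | 3 => v' H k A
  | 4 => F4 H k A
  | 5 => F5 H k A
  | _ => F6 H k A

variable {H k A}

lemma continuous_sinh_k : Continuous fun x : ℝ => Real.sinh (k*x) :=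
  Real.continuous_sinh.comp (continuous_const.mul continuous_id)

lemma continuous_cosh_k : Continuous fun x : ℝ => Real.cosh (k*x) :=
  Real.continuous_cosh.comp (continuous_const.mul continuous_id)

lemma continuous_W1 (hH : Continuous H) : Continuous (W1 H) := continuous_P hH 1
lemma continuous_w (hH : Continuous H) : Continuous (w H) := continuous_P (continuous_W1 hH) 1
lemma continuous_Cc (hH : Continuous H) : Continuous (Cc H k) :=
  continuous_P (continuous_cosh_k.mul (continuous_w hH)) 0
lemma continuous_Ss (hH : Continuous H) : Continuous (Ss H k) :=
  continuous_P (continuous_sinh_k.mul (continuous_w hH)) 0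
lemma continuous_v (hH : Continuous H) : Continuous (v H k A) :=
  (continuous_const.mul continuous_sinh_k).sub (continuous_const.mul
    ((continuous_sinh_k.mul (continuous_Cc hH)).sub (continuous_cosh_k.mul (continuous_Ss hH))))
lemma continuous_v' (hH : Continuous H) : Continuous (v' H k A) :=
  (continuous_const.mul continuous_cosh_k).sub (continuous_const.mul
    ((continuous_cosh_k.mul (continuous_Cc hH)).sub (continuous_sinh_k.mul (continuous_Ss hH))))
lemma continuous_F4 (hH : Continuous H) : Continuous (F4 H k A) :=
  continuous_const.mul ((continuous_v hH).sub (continuous_w hH))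
lemma continuous_F6 (hH : Continuous H) : Continuous (F6 H k A) :=
  continuous_const.mul ((continuous_F4 hH).sub hH)

lemma hasDerivAt_sinh_k (x : ℝ) :
    HasDerivAt (fun x => Real.sinh (k*x)) (k * Real.cosh (k*x)) x := by
  simpa [mul_comm, Function.comp_def] using ((Real.hasDerivAt_sinh (k*x)).comp x ((hasDerivAt_id x).const_mul k))

lemma hasDerivAt_cosh_k (x : ℝ) :
    HasDerivAt (fun x => Real.cosh (k*x)) (k * Real.sinh (k*x)) x := by
  simpa [mul_comm, Function.comp_def] using ((Real.hasDerivAt_cosh (k*x)).comp x ((hasDerivAt_id x).const_mul k))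

lemma hasDerivAt_w (hH : Continuous H) (x : ℝ) : HasDerivAt (w H) (W1 H x) x :=
  hasDerivAt_P (continuous_W1 hH) 1 x

lemma hasDerivAt_Cc (hH : Continuous H) (x : ℝ) :
    HasDerivAt (Cc H k) (Real.cosh (k*x) * w H x) x :=
  hasDerivAt_P (continuous_cosh_k.mul (continuous_w hH)) 0 x

lemma hasDerivAt_Ss (hH : Continuous H) (x : ℝ) :
    HasDerivAt (Ss H k) (Real.sinh (k*x) * w H x) x :=
  hasDerivAt_P (continuous_sinh_k.mul (continuous_w hH)) 0 x

lemma hasDerivAt_v (hH : Continuous H) (x : ℝ) :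
    HasDerivAt (v H k A) (v' H k A x) x := by
  have h1 := ((hasDerivAt_sinh_k (k := k) x).const_mul A)
  have h2 := ((hasDerivAt_sinh_k (k := k) x).mul (hasDerivAt_Cc (k := k) hH x))
  have h3 := ((hasDerivAt_cosh_k (k := k) x).mul (hasDerivAt_Ss (k := k) hH x))
  have hd := h1.sub (((h2.sub h3)).const_mul k)
  refine hd.congr_deriv (Eq.symm ?_)
  unfold v'
  ring

lemma hasDerivAt_v' (hH : Continuous H) (x : ℝ) :
    HasDerivAt (v' H k A) (F4 H k A x) x := by
  have h1 := ((hasDerivAt_cosh_k (k := k) x).const_mul (A * k))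
  have h2 := ((hasDerivAt_cosh_k (k := k) x).mul (hasDerivAt_Cc (k := k) hH x))
  have h3 := ((hasDerivAt_sinh_k (k := k) x).mul (hasDerivAt_Ss (k := k) hH x))
  have hd := h1.sub (((h2.sub h3)).const_mul (k^2))
  refine hd.congr_deriv (Eq.symm ?_)
  have hcs : Real.cosh (k*x)^2 - Real.sinh (k*x)^2 = 1 := Real.cosh_sq_sub_sinh_sq (k*x)
  unfold F4 v w
  linear_combination (k^2 * P (W1 H) 1 x) * hcs

lemma hasDerivAt_F4 (hH : Continuous H) (x : ℝ) :
    HasDerivAt (F4 H k A) (F5 H k A x) x :=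
  ((hasDerivAt_v (k := k) (A := A) hH x).sub (hasDerivAt_w hH x)).const_mul (k^2)

lemma hasDerivAt_F5 (hH : Continuous H) (x : ℝ) :
    HasDerivAt (F5 H k A) (F6 H k A x) x :=
  ((hasDerivAt_v' (k := k) (A := A) hH x).sub (hasDerivAt_P hH 1 x)).const_mul (k^2)

lemma chain (hH : Continuous H) :
    ∀ n < 6, ∀ x, HasDerivAt (Fc H k A n) (Fc H k A (n+1) x) x := by
  intro n hn x
  interval_cases n
  · exact hasDerivAt_P (continuous_P (continuous_v hH) 0) 0 x
  · exact hasDerivAt_P (continuous_v hH) 0 x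
  · exact hasDerivAt_v hH x
  · exact hasDerivAt_v' hH x
  · exact hasDerivAt_F4 hH x
  · exact hasDerivAt_F5 hH x

lemma dv_chain (F : ℕ → ℝ → ℝ) :
    ∀ (m : ℕ), (∀ n < m, ∀ x, HasDerivAt (F n) (F (n+1) x) x) →
      ∀ x ∈ Icc (0:ℝ) 1, iteratedDerivWithin m (F 0) (Icc (0:ℝ) 1) x = F m x := by
  intro m
  induction m with
  | zero => intro _ x _; simp
  | succ m ih =>
    intro hF x hx
    have hu : UniqueDiffOn ℝ (Icc (0:ℝ) 1) := uniqueDiffOn_Icc one_pos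
    rw [iteratedDerivWithin_succ]
    have heq : EqOn (iteratedDerivWithin m (F 0) (Icc (0:ℝ) 1)) (F m) (Icc (0:ℝ) 1) :=
      fun y hy => ih (fun n hn => hF n (hn.trans (Nat.lt_succ_self m))) y hy
    rw [derivWithin_congr heq (heq hx)]
    exact ((hF m (Nat.lt_succ_self m) x).hasDerivWithinAt).derivWithin (hu x hx)

lemma contDiff_chain :
    ∀ (m : ℕ) (F : ℕ → ℝ → ℝ), (∀ n < m, ∀ x, HasDerivAt (F n) (F (n+1) x) x) →
      Continuous (F m) → ContDiff ℝ m (F 0) := by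
  intro m
  induction m with
  | zero => intro F _ hc; exact contDiff_zero.2 hc
  | succ m ih =>
    intro F hF hc
    have hd : Differentiable ℝ (F 0) := fun x => (hF 0 (by omega) x).differentiableAt
    have hder : deriv (F 0) = F 1 := funext fun x => (hF 0 (by omega) x).deriv
    have hcast : ((m + 1 : ℕ) : WithTop ℕ∞) = (m : WithTop ℕ∞) + 1 := by push_cast; rfl
    rw [hcast]
    refine contDiff_succ_iff_deriv.2 ⟨hd, by simp, ?_⟩
    rw [hder]
    exact ih (fun n => F (n+1)) (fun n hn x => hF (n+1) (by omega) x) hc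

end Beam
end

open Beam in
/-- The beam operator `A₀ f = f⁽⁴⁾ − ζ f⁽⁶⁾` with the beam boundary conditions
is surjective onto continuous right-hand sides. -/
theorem stmt_4 (ζ : ℝ) (hζ : 0 < ζ) (h : ℝ → ℝ)
    (hh : ContinuousOn h (Icc (0:ℝ) 1)) :
    ∃ f : ℝ → ℝ, ContDiffOn ℝ 6 f (Icc (0:ℝ) 1) ∧ BeamBC ζ f ∧
      ∀ x ∈ Icc (0:ℝ) 1, Dv 4 f x - ζ * Dv 6 f x = h x := by
  -- extend h continuously
  set H : ℝ → ℝ := fun x => h (max 0 (min 1 x)) with hHdef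
  have hproj : ∀ x : ℝ, max 0 (min 1 x) ∈ Icc (0:ℝ) 1 := fun x =>
    ⟨le_max_left _ _, max_le (by norm_num) (min_le_left _ _)⟩
  have hH : Continuous H := by
    have hc : Continuous fun x : ℝ => max 0 (min 1 x) := continuous_const.max (continuous_const.min continuous_id)
    exact hh.comp_continuous hc hproj
  have hHeq : ∀ x ∈ Icc (0:ℝ) 1, H x = h x := by
    intro x hx
    simp only [hHdef]
    rw [min_eq_right hx.2, max_eq_right hx.1]
  -- constants
  set k : ℝ := (Real.sqrt ζ)⁻¹ with hkdef
  have hk2 : ζ * k^2 = 1 := by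
    rw [hkdef, inv_pow, Real.sq_sqrt hζ.le]
    field_simp
  set A : ℝ := k * (Real.cosh k * Cc H k 1 - Real.sinh k * Ss H k 1) / Real.cosh k with hAdef
  -- derivative facts
  have h0m : (0:ℝ) ∈ Icc (0:ℝ) 1 := by norm_num
  have h1m : (1:ℝ) ∈ Icc (0:ℝ) 1 := by norm_num
  have hdv : ∀ m ≤ 6, ∀ x ∈ Icc (0:ℝ) 1, Dv m (Beam.f H k A) x = Fc H k A m x := by
    intro m hm x hx
    exact dv_chain (Fc H k A) m (fun n hn => chain hH n (lt_of_lt_of_le hn hm)) x hx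
  -- endpoint values
  have hw1 : w H 1 = 0 := P_same _ _
  have hW11 : W1 H 1 = 0 := P_same _ _
  have hv0 : v H k A 0 = 0 := by
    unfold Beam.v Beam.Cc Beam.Ss
    simp [P_same]
  have hv'1 : v' H k A 1 = 0 := by
    have hch : Real.cosh k ≠ 0 := (Real.cosh_pos k).ne'
    unfold Beam.v'
    rw [hAdef]
    field_simp
    ring
  refine ⟨Beam.f H k A, ?_, ?_, ?_⟩
  · -- smoothness
    have h6 := contDiff_chain 6 (Fc H k A) (chain hH) (continuous_F6 hH)
    exact_mod_cast (h6.contDiffOn : ContDiffOn ℝ ((6:ℕ) : WithTop ℕ∞) _ _)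
  · -- boundary conditions
    refine ⟨?_, ?_, ?_, ?_, ?_, ?_⟩
    · show Beam.f H k A 0 = 0; exact P_same _ _
    · rw [show Dv 1 (Beam.f H k A) 0 = Fc H k A 1 0 from hdv 1 (by norm_num) 0 h0m]
      exact P_same _ _
    · rw [show Dv 2 (Beam.f H k A) 0 = Fc H k A 2 0 from hdv 2 (by norm_num) 0 h0m]
      exact hv0
    · rw [show Dv 2 (Beam.f H k A) 1 = Fc H k A 2 1 from hdv 2 (by norm_num) 1 h1m,
        show Dv 4 (Beam.f H k A) 1 = Fc H k A 4 1 from hdv 4 (by norm_num) 1 h1m]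
      show v H k A 1 - ζ * (k^2 * (v H k A 1 - w H 1)) = 0
      rw [hw1]
      linear_combination (-(v H k A 1)) * hk2
    · rw [show Dv 5 (Beam.f H k A) 1 = Fc H k A 5 1 from hdv 5 (by norm_num) 1 h1m,
        show Dv 3 (Beam.f H k A) 1 = Fc H k A 3 1 from hdv 3 (by norm_num) 1 h1m]
      show ζ * (k^2 * (v' H k A 1 - W1 H 1)) - v' H k A 1 = 0
      rw [hW11, hv'1]
      ring
    · rw [show Dv 3 (Beam.f H k A) 1 = Fc H k A 3 1 from hdv 3 (by norm_num) 1 h1m]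
      show ζ * v' H k A 1 = 0
      rw [hv'1]; ring
  · -- the equation
    intro x hx
    rw [show Dv 4 (Beam.f H k A) x = Fc H k A 4 x from hdv 4 (by norm_num) x hx,
      show Dv 6 (Beam.f H k A) x = Fc H k A 6 x from hdv 6 (by norm_num) x hx, ← hHeq x hx]
    show F4 H k A x - ζ * (k^2 * (F4 H k A x - H x)) = H x
    linear_combination (-(F4 H k A x - H x)) * hk2
end

section
/- Let ζ > 0 and let (μ, φ) be an eigenpair of the beam problem. Then μ > 0. -/
open Set MeasureTheory intervalIntegral

lemma zero_of_sq_integral (g : ℝ → ℝ) (hg : ContinuousOn g (Icc (0:ℝ) 1))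
    (h0 : ∫ x in (0:ℝ)..1, g x ^ 2 = 0) : ∀ x ∈ Icc (0:ℝ) 1, g x = 0 := by
  have hgi : IntervalIntegrable (fun x => g x ^ 2) volume 0 1 := by
    apply ContinuousOn.intervalIntegrable
    rw [uIcc_of_le (by norm_num : (0:ℝ) ≤ 1)]
    exact hg.pow 2
  have hae : (fun x => g x ^ 2) =ᵐ[volume.restrict (Ioc (0:ℝ) 1)] 0 := by
    rw [← integral_eq_zero_iff_of_le_of_nonneg_ae (by norm_num)
      (Filter.Eventually.of_forall fun x => sq_nonneg _) hgi]
    exact h0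
  have hae2 : (fun x => g x ^ 2) =ᵐ[volume.restrict (Icc (0:ℝ) 1)] 0 := by
    rwa [Measure.restrict_congr_set Ioc_ae_eq_Icc] at hae
  have h := Measure.eqOn_Icc_of_ae_eq (μ := volume) (by norm_num : (0:ℝ) ≠ 1) hae2
    (hg.pow 2) continuousOn_const
  intro x hx
  simpa [pow_eq_zero_iff] using h hx

/-- Every eigenvalue of the beam problem is positive. -/
theorem stmt_5 (ζ : ℝ) (hζ : 0 < ζ) (μ : ℝ) (φ : ℝ → ℝ)
    (h : BeamEigenpair ζ μ φ) : 0 < μ := by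
  obtain ⟨hφ, hBC, hne, heq⟩ := h
  set f : ℕ → ℝ → ℝ := fun m => Dv m φ with hfdef
  have hf0 : ∀ x, f 0 x = φ x := by intro x; simp [hfdef, Dv]
  have hud : UniqueDiffOn ℝ (Icc (0:ℝ) 1) := uniqueDiffOn_Icc (by norm_num)
  have hcont : ∀ m : ℕ, m ≤ 6 → ContinuousOn (f m) (Icc (0:ℝ) 1) := fun m hm =>
    hφ.continuousOn_iteratedDerivWithin (by exact_mod_cast hm) hud
  have hd : ∀ m : ℕ, m < 6 → ∀ x ∈ Icc (0:ℝ) 1,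
      HasDerivWithinAt (f m) (f (m+1) x) (Icc (0:ℝ) 1) x := by
    intro m hm x hx
    have hdiff : DifferentiableWithinAt ℝ (f m) (Icc (0:ℝ) 1) x :=
      hφ.differentiableOn_iteratedDerivWithin (by exact_mod_cast hm) hud x hx
    have h2 := hdiff.hasDerivWithinAt
    have h3 : f (m+1) x = derivWithin (f m) (Icc (0:ℝ) 1) x := by
      simp only [hfdef, Dv]
      exact congrFun iteratedDerivWithin_succ x
    rw [h3]
    exact h2
  have hdAt : ∀ m : ℕ, m < 6 → ∀ x ∈ Ioo (0:ℝ) 1, HasDerivAt (f m) (f (m+1) x) x := by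
    intro m hm x hx
    exact (hd m hm x (Ioo_subset_Icc_self hx)).hasDerivAt (Icc_mem_nhds hx.1 hx.2)
  -- interval integrability of continuous combos
  have hint : ∀ g : ℝ → ℝ, ContinuousOn g (Icc (0:ℝ) 1) →
      IntervalIntegrable g volume 0 1 := by
    intro g hg
    apply ContinuousOn.intervalIntegrable
    rwa [uIcc_of_le (by norm_num : (0:ℝ) ≤ 1)]
  -- the two antiderivatives
  set H : ℝ → ℝ := fun x => f 3 x * f 0 x - f 2 x * f 1 x with hHdef
  set G : ℝ → ℝ := fun x => f 5 x * f 0 x - f 4 x * f 1 x + f 3 x * f 2 x with hGdef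
  have hHc : ContinuousOn H (Icc (0:ℝ) 1) :=
    ((hcont 3 (by norm_num)).mul (hcont 0 (by norm_num))).sub
      ((hcont 2 (by norm_num)).mul (hcont 1 (by norm_num)))
  have hGc : ContinuousOn G (Icc (0:ℝ) 1) :=
    (((hcont 5 (by norm_num)).mul (hcont 0 (by norm_num))).sub
      ((hcont 4 (by norm_num)).mul (hcont 1 (by norm_num)))).add
      ((hcont 3 (by norm_num)).mul (hcont 2 (by norm_num)))
  have hH' : ∀ x ∈ Ioo (0:ℝ) 1, HasDerivAt H (f 4 x * f 0 x - f 2 x ^ 2) x := by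
    intro x hx
    have := (((hdAt 3 (by norm_num) x hx).mul (hdAt 0 (by norm_num) x hx)).sub
      ((hdAt 2 (by norm_num) x hx).mul (hdAt 1 (by norm_num) x hx)))
    exact this.congr_deriv (by norm_num; ring)
  have hG' : ∀ x ∈ Ioo (0:ℝ) 1, HasDerivAt G (f 6 x * f 0 x + f 3 x ^ 2) x := by
    intro x hx
    have := ((((hdAt 5 (by norm_num) x hx).mul (hdAt 0 (by norm_num) x hx)).sub
      ((hdAt 4 (by norm_num) x hx).mul (hdAt 1 (by norm_num) x hx))).add
      ((hdAt 3 (by norm_num) x hx).mul (hdAt 2 (by norm_num) x hx)))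
    exact this.congr_deriv (by norm_num; ring)
  have intH : IntervalIntegrable (fun x => f 4 x * f 0 x - f 2 x ^ 2) volume 0 1 :=
    hint _ (((hcont 4 (by norm_num)).mul (hcont 0 (by norm_num))).sub
      ((hcont 2 (by norm_num)).pow 2))
  have intG : IntervalIntegrable (fun x => f 6 x * f 0 x + f 3 x ^ 2) volume 0 1 :=
    hint _ (((hcont 6 (by norm_num)).mul (hcont 0 (by norm_num))).add
      ((hcont 3 (by norm_num)).pow 2))
  have int40 : IntervalIntegrable (fun x => f 4 x * f 0 x) volume 0 1 :=
    hint _ ((hcont 4 (by norm_num)).mul (hcont 0 (by norm_num)))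
  have int60 : IntervalIntegrable (fun x => f 6 x * f 0 x) volume 0 1 :=
    hint _ ((hcont 6 (by norm_num)).mul (hcont 0 (by norm_num)))
  have int2 : IntervalIntegrable (fun x => f 2 x ^ 2) volume 0 1 :=
    hint _ ((hcont 2 (by norm_num)).pow 2)
  have int3 : IntervalIntegrable (fun x => f 3 x ^ 2) volume 0 1 :=
    hint _ ((hcont 3 (by norm_num)).pow 2)
  have eH : ∫ x in (0:ℝ)..1, (f 4 x * f 0 x - f 2 x ^ 2) = H 1 - H 0 :=
    integral_eq_sub_of_hasDeriv_right_of_le (by norm_num) hHc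
      (fun x hx => (hH' x hx).hasDerivWithinAt) intH
  have eG : ∫ x in (0:ℝ)..1, (f 6 x * f 0 x + f 3 x ^ 2) = G 1 - G 0 :=
    integral_eq_sub_of_hasDeriv_right_of_le (by norm_num) hGc
      (fun x hx => (hG' x hx).hasDerivWithinAt) intG
  rw [integral_sub int40 int2] at eH
  rw [integral_add int60 int3] at eG
  -- the eigen-equation integral identity
  have eμ : (∫ x in (0:ℝ)..1, f 4 x * f 0 x) - ζ * ∫ x in (0:ℝ)..1, f 6 x * f 0 x
      = μ * ∫ x in (0:ℝ)..1, f 0 x ^ 2 := by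
    have e6 : ζ * ∫ x in (0:ℝ)..1, f 6 x * f 0 x = ∫ x in (0:ℝ)..1, ζ * (f 6 x * f 0 x) :=
      (intervalIntegral.integral_const_mul ζ _).symm
    have e0 : μ * ∫ x in (0:ℝ)..1, f 0 x ^ 2 = ∫ x in (0:ℝ)..1, μ * f 0 x ^ 2 :=
      (intervalIntegral.integral_const_mul μ _).symm
    rw [e6, e0, ← integral_sub int40 (int60.const_mul ζ)]
    apply integral_congr
    intro x hx
    rw [uIcc_of_le (by norm_num : (0:ℝ) ≤ 1)] at hx
    have hq := heq x hx
    have h0 := hf0 x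
    simp only [hfdef] at h0 ⊢
    linear_combination Dv 0 φ x * hq - μ * Dv 0 φ x * h0
  -- boundary conditions
  obtain ⟨b0, b1, b2, b3, b4, b5⟩ := hBC
  have hH0 : H 0 = 0 := by
    simp only [hHdef, hf0, b0]
    simp [hfdef, b1]
  have hG0 : G 0 = 0 := by
    simp only [hGdef, hf0, b0]
    simp [hfdef, b1, b2]
  have hbdry : H 1 - ζ * G 1 = 0 := by
    simp only [hHdef, hGdef, hfdef]
    linear_combination (-(Dv 0 φ 1)) * b4 - Dv 1 φ 1 * b3 - Dv 2 φ 1 * b5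
  have key : μ * ∫ x in (0:ℝ)..1, f 0 x ^ 2
      = (∫ x in (0:ℝ)..1, f 2 x ^ 2) + ζ * ∫ x in (0:ℝ)..1, f 3 x ^ 2 := by
    rw [← eμ]
    linear_combination eH - ζ * eG + hbdry - hH0 + ζ * hG0
  -- positivity
  by_contra hμ
  push_neg at hμ
  have I0 : (0:ℝ) ≤ ∫ x in (0:ℝ)..1, f 0 x ^ 2 :=
    integral_nonneg (by norm_num) (fun x _ => sq_nonneg _)
  have I2 : (0:ℝ) ≤ ∫ x in (0:ℝ)..1, f 2 x ^ 2 :=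
    integral_nonneg (by norm_num) (fun x _ => sq_nonneg _)
  have I3 : (0:ℝ) ≤ ∫ x in (0:ℝ)..1, f 3 x ^ 2 :=
    integral_nonneg (by norm_num) (fun x _ => sq_nonneg _)
  have hle : μ * ∫ x in (0:ℝ)..1, f 0 x ^ 2 ≤ 0 := mul_nonpos_of_nonpos_of_nonneg hμ I0
  have hI2z : ∫ x in (0:ℝ)..1, f 2 x ^ 2 = 0 := by nlinarith
  have hf2z : ∀ x ∈ Icc (0:ℝ) 1, f 2 x = 0 :=
    zero_of_sq_integral (f 2) (hcont 2 (by norm_num)) hI2z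
  -- f 1 is constant zero, then φ is constant zero
  have hmem : ∀ x ∈ Ico (0:ℝ) 1, Icc (0:ℝ) 1 ∈ nhdsWithin x (Ici x) := by
    intro x hx
    apply Filter.mem_of_superset
      (Filter.inter_mem self_mem_nhdsWithin
        (mem_nhdsWithin_of_mem_nhds (Iio_mem_nhds hx.2)))
    rintro y ⟨hy1, hy2⟩
    exact ⟨le_trans hx.1 hy1, le_of_lt hy2⟩
  have hf1z : ∀ x ∈ Icc (0:ℝ) 1, f 1 x = 0 := by
    have := constant_of_has_deriv_right_zero (f := f 1) (a := (0:ℝ)) (b := 1)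
      (hcont 1 (by norm_num)) (fun x hx => by
        have h := (hd 1 (by norm_num) x (Ico_subset_Icc_self hx)).mono_of_mem_nhdsWithin (hmem x hx)
        rwa [hf2z x (Ico_subset_Icc_self hx)] at h)
    intro x hx
    rw [this x hx]
    exact b1
  have hf0z : ∀ x ∈ Icc (0:ℝ) 1, φ x = 0 := by
    have := constant_of_has_deriv_right_zero (f := f 0) (a := (0:ℝ)) (b := 1)
      (hcont 0 (by norm_num)) (fun x hx => by
        have h := (hd 0 (by norm_num) x (Ico_subset_Icc_self hx)).mono_of_mem_nhdsWithin (hmem x hx)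
        rwa [hf1z x (Ico_subset_Icc_self hx)] at h)
    intro x hx
    rw [← hf0 x, this x hx, hf0 0]
    exact b0
  exact hne hf0z
end

section
/- Let ζ > 0 and let (μ₁, φ₁) and (μ₂, φ₂) be eigenpairs of the beam problem with μ₁ ≠ μ₂. Then ∫₀¹ φ₁(x) φ₂(x) dx = 0; that is, eigenfunctions corresponding to distinct eigenvalues are orthogonal in L²(0,1). -/
open Set MeasureTheory intervalIntegral

lemma uD01 : UniqueDiffOn ℝ (Icc (0:ℝ) 1) := uniqueDiffOn_Icc one_pos

lemma contDv {φ : ℝ → ℝ} (hφ : ContDiffOn ℝ 6 φ (Icc (0:ℝ) 1)) {m : ℕ} (hm : m ≤ 6) :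
    ContinuousOn (Dv m φ) (Icc (0:ℝ) 1) :=
  hφ.continuousOn_iteratedDerivWithin (by exact_mod_cast hm) uD01

lemma hasDv {φ : ℝ → ℝ} (hφ : ContDiffOn ℝ 6 φ (Icc (0:ℝ) 1)) {m : ℕ} (hm : m < 6)
    {x : ℝ} (hx : x ∈ Icc (0:ℝ) 1) :
    HasDerivWithinAt (Dv m φ) (Dv (m+1) φ x) (Icc (0:ℝ) 1) x := by
  have h := (hφ.differentiableOn_iteratedDerivWithin (n := 6) (m := m)
    (by exact_mod_cast hm) uD01 x hx).hasDerivWithinAt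
  rwa [Dv, iteratedDerivWithin_succ]

lemma ibp (u v u' v' : ℝ → ℝ)
    (hu : ContinuousOn u (Icc (0:ℝ) 1)) (hv : ContinuousOn v (Icc (0:ℝ) 1))
    (hu' : ContinuousOn u' (Icc (0:ℝ) 1)) (hv' : ContinuousOn v' (Icc (0:ℝ) 1))
    (hdu : ∀ x ∈ Icc (0:ℝ) 1, HasDerivWithinAt u (u' x) (Icc (0:ℝ) 1) x)
    (hdv : ∀ x ∈ Icc (0:ℝ) 1, HasDerivWithinAt v (v' x) (Icc (0:ℝ) 1) x) :
    ∫ x in (0:ℝ)..1, u' x * v x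
      = u 1 * v 1 - u 0 * v 0 - ∫ x in (0:ℝ)..1, u x * v' x := by
  have hic : uIcc (0:ℝ) 1 = Icc (0:ℝ) 1 := uIcc_of_le zero_le_one
  have hiu' : IntervalIntegrable u' volume 0 1 := (hic ▸ hu').intervalIntegrable
  have hiv' : IntervalIntegrable v' volume 0 1 := (hic ▸ hv').intervalIntegrable
  have hiu : IntervalIntegrable u volume 0 1 := (hic ▸ hu).intervalIntegrable
  have hiv : IntervalIntegrable v volume 0 1 := (hic ▸ hv).intervalIntegrable
  have key := integral_deriv_mul_eq_sub_of_hasDeriv_right (a := (0:ℝ)) (b := 1)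
    (hic ▸ hu) (hic ▸ hv)
    (fun x hx => by
      have hx' : x ∈ Ioo (0:ℝ) 1 := by simpa using hx
      exact ((hdu x (Ioo_subset_Icc_self hx')).hasDerivAt
        (Icc_mem_nhds hx'.1 hx'.2)).hasDerivWithinAt)
    (fun x hx => by
      have hx' : x ∈ Ioo (0:ℝ) 1 := by simpa using hx
      exact ((hdv x (Ioo_subset_Icc_self hx')).hasDerivAt
        (Icc_mem_nhds hx'.1 hx'.2)).hasDerivWithinAt)
    hiu' hiv'
  have hadd : ∫ x in (0:ℝ)..1, (u' x * v x + u x * v' x)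
      = (∫ x in (0:ℝ)..1, u' x * v x) + ∫ x in (0:ℝ)..1, u x * v' x :=
    integral_add (hiu'.mul_continuousOn (hic ▸ hv)) (hiv'.continuousOn_mul (hic ▸ hu))
  rw [hadd] at key
  linarith

lemma step {f g : ℝ → ℝ} (hf : ContDiffOn ℝ 6 f (Icc (0:ℝ) 1))
    (hg : ContDiffOn ℝ 6 g (Icc (0:ℝ) 1)) {a b : ℕ} (ha : a < 6) (hb : b < 6) :
    ∫ x in (0:ℝ)..1, Dv (a+1) f x * Dv b g x
      = Dv a f 1 * Dv b g 1 - Dv a f 0 * Dv b g 0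
        - ∫ x in (0:ℝ)..1, Dv a f x * Dv (b+1) g x :=
  ibp _ _ _ _ (contDv hf ha.le) (contDv hg hb.le) (contDv hf ha) (contDv hg hb)
    (fun x hx => hasDv hf ha hx) (fun x hx => hasDv hg hb hx)

/-- Eigenfunctions of the beam problem corresponding to distinct eigenvalues are
orthogonal in `L²(0,1)`. -/
theorem stmt_6 (ζ : ℝ) (hζ : 0 < ζ) (μ₁ μ₂ : ℝ) (φ₁ φ₂ : ℝ → ℝ)
    (h₁ : BeamEigenpair ζ μ₁ φ₁) (h₂ : BeamEigenpair ζ μ₂ φ₂) (hμ : μ₁ ≠ μ₂) :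
    ∫ x in (0:ℝ)..1, φ₁ x * φ₂ x = 0 := by
  obtain ⟨hf, ⟨bf0, bf1, bf2, bf3, bf4, bf5⟩, -, heq1⟩ := h₁
  obtain ⟨hg, ⟨bg0, bg1, bg2, bg3, bg4, bg5⟩, -, heq2⟩ := h₂
  have hic : uIcc (0:ℝ) 1 = Icc (0:ℝ) 1 := uIcc_of_le zero_le_one
  have hDv0 : ∀ h : ℝ → ℝ, Dv 0 h = h := fun h => by
    funext x; simp [Dv]
  -- boundary facts
  have hf3 : Dv 3 φ₁ 1 = 0 := by
    rcases mul_eq_zero.1 bf5 with h | h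
    · exact absurd h hζ.ne'
    · exact h
  have hg3 : Dv 3 φ₂ 1 = 0 := by
    rcases mul_eq_zero.1 bg5 with h | h
    · exact absurd h hζ.ne'
    · exact h
  have hf5 : Dv 5 φ₁ 1 = 0 := by
    have : ζ * Dv 5 φ₁ 1 = 0 := by rw [hf3] at bf4; linarith
    rcases mul_eq_zero.1 this with h | h
    · exact absurd h hζ.ne'
    · exact h
  have hg5 : Dv 5 φ₂ 1 = 0 := by
    have : ζ * Dv 5 φ₂ 1 = 0 := by rw [hg3] at bg4; linarith
    rcases mul_eq_zero.1 this with h | h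
    · exact absurd h hζ.ne'
    · exact h
  have hf2 : Dv 2 φ₁ 1 = ζ * Dv 4 φ₁ 1 := by linarith
  have hg2 : Dv 2 φ₂ 1 = ζ * Dv 4 φ₂ 1 := by linarith
  -- integration by parts steps
  have s1 := step (a := 3) (b := 0) hf hg (by norm_num) (by norm_num)
  have s2 := step (a := 2) (b := 1) hf hg (by norm_num) (by norm_num)
  have s3 := step (a := 1) (b := 2) hf hg (by norm_num) (by norm_num)
  have s4 := step (a := 0) (b := 3) hf hg (by norm_num) (by norm_num)
  have s5 := step (a := 5) (b := 0) hf hg (by norm_num) (by norm_num)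
  have s6 := step (a := 4) (b := 1) hf hg (by norm_num) (by norm_num)
  have s7 := step (a := 3) (b := 2) hf hg (by norm_num) (by norm_num)
  have s8 := step (a := 2) (b := 3) hf hg (by norm_num) (by norm_num)
  have s9 := step (a := 1) (b := 4) hf hg (by norm_num) (by norm_num)
  have s10 := step (a := 0) (b := 5) hf hg (by norm_num) (by norm_num)
  simp only [hDv0] at s1 s2 s3 s4 s5 s6 s7 s8 s9 s10
  norm_num at s1 s2 s3 s4 s5 s6 s7 s8 s9 s10
  -- the eigenvalue equations in integral form
  have hI4 : IntervalIntegrable (fun x => Dv 4 φ₁ x * φ₂ x) volume 0 1 :=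
    (hic ▸ ((contDv hf (by norm_num)).mul hg.continuousOn)).intervalIntegrable
  have hI6 : IntervalIntegrable (fun x => ζ * (Dv 6 φ₁ x * φ₂ x)) volume 0 1 :=
    (hic ▸ (((contDv hf (by norm_num)).mul hg.continuousOn).const_smul ζ)).intervalIntegrable
  have hJ4 : IntervalIntegrable (fun x => φ₁ x * Dv 4 φ₂ x) volume 0 1 :=
    (hic ▸ (hf.continuousOn.mul (contDv hg (by norm_num)))).intervalIntegrable
  have hJ6 : IntervalIntegrable (fun x => ζ * (φ₁ x * Dv 6 φ₂ x)) volume 0 1 :=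
    (hic ▸ ((hf.continuousOn.mul (contDv hg (by norm_num))).const_smul ζ)).intervalIntegrable
  have m1 : (∫ x in (0:ℝ)..1, Dv 4 φ₁ x * φ₂ x)
      - ζ * ∫ x in (0:ℝ)..1, Dv 6 φ₁ x * φ₂ x
      = μ₁ * ∫ x in (0:ℝ)..1, φ₁ x * φ₂ x := by
    rw [← intervalIntegral.integral_const_mul, ← intervalIntegral.integral_const_mul, ← integral_sub hI4 hI6]
    apply integral_congr
    intro x hx
    rw [hic] at hx
    have h := heq1 x hx
    simp only
    linear_combination φ₂ x * h
  have m2 : (∫ x in (0:ℝ)..1, φ₁ x * Dv 4 φ₂ x)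
      - ζ * ∫ x in (0:ℝ)..1, φ₁ x * Dv 6 φ₂ x
      = μ₂ * ∫ x in (0:ℝ)..1, φ₁ x * φ₂ x := by
    rw [← intervalIntegral.integral_const_mul, ← intervalIntegral.integral_const_mul, ← integral_sub hJ4 hJ6]
    apply integral_congr
    intro x hx
    rw [hic] at hx
    have h := heq2 x hx
    simp only
    linear_combination φ₁ x * h
  have key : μ₁ * (∫ x in (0:ℝ)..1, φ₁ x * φ₂ x)
      = μ₂ * ∫ x in (0:ℝ)..1, φ₁ x * φ₂ x := by
    rw [bf0, bg0, bf1, bg1, bf2, bg2, hf2, hg2, hf3, hg3, hf5, hg5] at *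
    linear_combination m2 - m1 + s1 - s2 + s3 - s4
      - ζ*s5 + ζ*s6 - ζ*s7 + ζ*s8 - ζ*s9 + ζ*s10
  have : (μ₁ - μ₂) * ∫ x in (0:ℝ)..1, φ₁ x * φ₂ x = 0 := by ring_nf; linarith
  rcases mul_eq_zero.1 this with h | h
  · exact absurd (by linarith : μ₁ = μ₂) hμ
  · exact h
end

section
/- Let ζ > 0 and let (λ², φ) be an eigenpair of the beam problem with eigenvalue written as λ². Then ζ (φ‴(0))² = λ² ∫₀¹ (φ(x))² dx + ∫₀¹ (3 (φ″(x))² + 5ζ (φ‴(x))²) dx. -/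
open Set MeasureTheory intervalIntegral

private lemma hdw3 {u v : ℝ → ℝ} {u' v' x : ℝ} {s : Set ℝ} (c : ℝ)
    (hu : HasDerivWithinAt u u' s x) (hv : HasDerivWithinAt v v' s x) :
    HasDerivWithinAt (fun y => c * (y - 1) * u y * v y)
      (c * (u x * v x + (x - 1) * (u' * v x + u x * v'))) s x := by
  have h := ((((hasDerivWithinAt_id x s).sub_const 1).const_mul c).mul hu).mul hv
  refine h.congr_deriv (Eq.symm ?_)
  simp only [id_eq, Pi.mul_apply]
  ring

private lemma hdw2 {u v : ℝ → ℝ} {u' v' x : ℝ} {s : Set ℝ} (c : ℝ)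
    (hu : HasDerivWithinAt u u' s x) (hv : HasDerivWithinAt v v' s x) :
    HasDerivWithinAt (fun y => c * u y * v y)
      (c * (u' * v x + u x * v')) s x := by
  have h := (hu.const_mul c).mul hv
  refine h.congr_deriv (Eq.symm ?_)
  ring

/-- For an eigenpair `(λ², φ)` of the beam problem,
`ζ (φ‴(0))² = λ² ∫₀¹ φ² + ∫₀¹ (3 (φ″)² + 5ζ (φ‴)²)`. -/
theorem stmt_8 (ζ : ℝ) (hζ : 0 < ζ) (lamsq : ℝ) (φ : ℝ → ℝ)
    (h : BeamEigenpair ζ lamsq φ) :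
    ζ * (Dv 3 φ 0)^2
      = lamsq * (∫ x in (0:ℝ)..1, (φ x)^2)
        + ∫ x in (0:ℝ)..1, (3 * (Dv 2 φ x)^2 + 5 * ζ * (Dv 3 φ x)^2) := by
  obtain ⟨hreg, ⟨hb0, hb1, hb2, hb3, hb4, hb5⟩, -, hode⟩ := h
  have hU : UniqueDiffOn ℝ (Icc (0:ℝ) 1) := uniqueDiffOn_Icc one_pos
  have hζ' : ζ ≠ 0 := ne_of_gt hζ
  have hg0 : Dv 0 φ = φ := by
    funext x; simp [Dv]
  have hg3_1 : Dv 3 φ 1 = 0 := by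
    rcases mul_eq_zero.1 hb5 with h' | h'
    · exact absurd h' hζ'
    · exact h'
  have hg2_1 : Dv 2 φ 1 = ζ * Dv 4 φ 1 := by linarith
  -- derivatives of the iterated derivatives
  have hder : ∀ m : ℕ, m < 6 → ∀ x ∈ Icc (0:ℝ) 1,
      HasDerivWithinAt (Dv m φ) (Dv (m+1) φ x) (Icc (0:ℝ) 1) x := by
    intro m hm x hx
    have hdiff : DifferentiableOn ℝ (iteratedDerivWithin m φ (Icc (0:ℝ) 1)) (Icc (0:ℝ) 1) :=
      hreg.differentiableOn_iteratedDerivWithin (by exact_mod_cast hm) hU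
    have h1 := (hdiff x hx).hasDerivWithinAt
    have h2 : Dv (m+1) φ x = derivWithin (Dv m φ) (Icc (0:ℝ) 1) x :=
      congrFun iteratedDerivWithin_succ x
    rw [h2]
    exact h1
  -- the potential function
  set F : ℝ → ℝ := fun x =>
    (-2) * (x - 1) * Dv 1 φ x * Dv 3 φ x + 2 * Dv 1 φ x * Dv 2 φ x
    + 1 * (x - 1) * Dv 2 φ x * Dv 2 φ x + (2*ζ) * (x - 1) * Dv 1 φ x * Dv 5 φ x
    + (-2*ζ) * Dv 1 φ x * Dv 4 φ x + (4*ζ) * Dv 2 φ x * Dv 3 φ x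
    + (-2*ζ) * (x - 1) * Dv 2 φ x * Dv 4 φ x + ζ * (x - 1) * Dv 3 φ x * Dv 3 φ x
    + lamsq * (x - 1) * Dv 0 φ x * Dv 0 φ x with hFdef
  have hE : ∀ x ∈ Icc (0:ℝ) 1, HasDerivWithinAt F
      (lamsq * (φ x)^2 + (3 * (Dv 2 φ x)^2 + 5 * ζ * (Dv 3 φ x)^2)) (Icc (0:ℝ) 1) x := by
    intro x hx
    have h0 := hder 0 (by norm_num) x hx
    have h1 := hder 1 (by norm_num) x hx
    have h2 := hder 2 (by norm_num) x hx
    have h3 := hder 3 (by norm_num) x hx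
    have h4 := hder 4 (by norm_num) x hx
    have h5 := hder 5 (by norm_num) x hx
    have hode' : Dv 4 φ x - ζ * Dv 6 φ x = lamsq * Dv 0 φ x := by
      rw [hg0]; exact hode x hx
    have H := ((((((((hdw3 (-2) h1 h3).add (hdw2 2 h1 h2)).add
      (hdw3 1 h2 h2)).add (hdw3 (2*ζ) h1 h5)).add (hdw2 (-2*ζ) h1 h4)).add
      (hdw2 (4*ζ) h2 h3)).add (hdw3 (-2*ζ) h2 h4)).add
      (hdw3 ζ h3 h3)).add (hdw3 lamsq h0 h0)
    simp only [Nat.reduceAdd] at H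
    refine H.congr_deriv (Eq.symm ?_)
    rw [hg0]
    linear_combination (2*(x-1)*(Dv 1 φ x)) * (hode x hx)
  have hFcont : ContinuousOn F (Icc (0:ℝ) 1) :=
    fun x hx => ((hE x hx).differentiableWithinAt).continuousWithinAt
  have hcont : ∀ m : ℕ, m ≤ 6 → ContinuousOn (Dv m φ) (Icc (0:ℝ) 1) := by
    intro m hm
    exact hreg.continuousOn_iteratedDerivWithin (by exact_mod_cast hm) hU
  have hEcont : ContinuousOn
      (fun x => lamsq * (φ x)^2 + (3 * (Dv 2 φ x)^2 + 5 * ζ * (Dv 3 φ x)^2))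
      (Icc (0:ℝ) 1) := by
    have hφ : ContinuousOn φ (Icc (0:ℝ) 1) := hreg.continuousOn
    have := hcont 2 (by norm_num)
    have := hcont 3 (by norm_num)
    fun_prop
  have hint : IntervalIntegrable
      (fun x => lamsq * (φ x)^2 + (3 * (Dv 2 φ x)^2 + 5 * ζ * (Dv 3 φ x)^2))
      volume 0 1 := by
    apply ContinuousOn.intervalIntegrable
    rwa [uIcc_of_le (by norm_num : (0:ℝ) ≤ 1)]
  have hFTC : (∫ x in (0:ℝ)..1,
      (lamsq * (φ x)^2 + (3 * (Dv 2 φ x)^2 + 5 * ζ * (Dv 3 φ x)^2))) = F 1 - F 0 := by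
    apply integral_eq_sub_of_hasDeriv_right_of_le (by norm_num) hFcont _ hint
    intro x hx
    have hmem : Icc (0:ℝ) 1 ∈ nhds x := Icc_mem_nhds hx.1 hx.2
    exact ((hE x (Ioo_subset_Icc_self hx)).hasDerivAt hmem).hasDerivWithinAt
  -- split the RHS integrals
  have hint1 : IntervalIntegrable (fun x => lamsq * (φ x)^2) volume 0 1 := by
    apply ContinuousOn.intervalIntegrable
    rw [uIcc_of_le (by norm_num : (0:ℝ) ≤ 1)]
    have hφ : ContinuousOn φ (Icc (0:ℝ) 1) := hreg.continuousOn
    fun_prop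
  have hint2 : IntervalIntegrable (fun x => 3 * (Dv 2 φ x)^2 + 5 * ζ * (Dv 3 φ x)^2)
      volume 0 1 := by
    apply ContinuousOn.intervalIntegrable
    rw [uIcc_of_le (by norm_num : (0:ℝ) ≤ 1)]
    have := hcont 2 (by norm_num)
    have := hcont 3 (by norm_num)
    fun_prop
  rw [← intervalIntegral.integral_const_mul, ← intervalIntegral.integral_add hint1 hint2, hFTC]
  -- evaluate F at the endpoints
  have hDv00 : Dv 0 φ 0 = 0 := by rw [hg0]; exact hb0
  have hF1 : F 1 = 0 := by
    simp only [hFdef]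
    rw [hg3_1, hg2_1]
    ring
  have hF0 : F 0 = -(ζ * (Dv 3 φ 0)^2) := by
    simp only [hFdef]
    rw [hb1, hb2, hDv00]
    ring
  rw [hF1, hF0]
  ring
end

section
/- Let ζ > 0 and let (μ, φ) be an eigenpair of the beam problem. Then φ‴(0) ≠ 0; that is, the third derivative at the clamped end of a nonzero eigenfunction cannot vanish. -/
open Set MeasureTheory intervalIntegral

lemma hasDeriv_Dv {f : ℝ → ℝ} (hreg : ContDiffOn ℝ 6 f (Icc (0:ℝ) 1)) (m : ℕ) (hm : m < 6)
    {x : ℝ} (hx : x ∈ Icc (0:ℝ) 1) :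
    HasDerivWithinAt (Dv m f) (Dv (m+1) f x) (Icc (0:ℝ) 1) x := by
  have hu : UniqueDiffOn ℝ (Icc (0:ℝ) 1) := uniqueDiffOn_Icc one_pos
  have hdiff : DifferentiableWithinAt ℝ (iteratedDerivWithin m f (Icc (0:ℝ) 1)) (Icc (0:ℝ) 1) x :=
    hreg.differentiableOn_iteratedDerivWithin (by exact_mod_cast hm) hu x hx
  have h2 := hdiff.hasDerivWithinAt
  have h3 : Dv (m+1) f x = derivWithin (Dv m f) (Icc (0:ℝ) 1) x :=
    congrFun iteratedDerivWithin_succ x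
  rw [h3]
  exact h2

/-- The third derivative at the clamped end of a nonzero eigenfunction of the
beam problem cannot vanish. -/
theorem stmt_9 (ζ : ℝ) (hζ : 0 < ζ) (μ : ℝ) (φ : ℝ → ℝ)
    (h : BeamEigenpair ζ μ φ) : Dv 3 φ 0 ≠ 0 := by
  obtain ⟨hreg, ⟨hb0, hb1, hb2, hb4, hb5, hb6⟩, hnz, hode⟩ := h
  intro hc
  apply hnz
  have hζ' : ζ ≠ 0 := ne_of_gt hζ
  have h31 : Dv 3 φ 1 = 0 := by
    rcases mul_eq_zero.mp hb6 with h' | h'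
    exacts [absurd h' hζ', h']
  have h51 : Dv 5 φ 1 = 0 := by
    have h5 : ζ * Dv 5 φ 1 = 0 := by rw [h31] at hb5; linarith
    rcases mul_eq_zero.mp h5 with h' | h'
    exacts [absurd h' hζ', h']
  have h21 : Dv 2 φ 1 = ζ * Dv 4 φ 1 := by linarith
  have hu : UniqueDiffOn ℝ (Icc (0:ℝ) 1) := uniqueDiffOn_Icc one_pos
  set H : ℝ → ℝ := fun y =>
    μ * (y * (φ y * φ y)) - φ y * Dv 3 φ y + ζ * (φ y * Dv 5 φ y)
    + 3 * (Dv 1 φ y * Dv 2 φ y)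
    - 2 * (y * (Dv 1 φ y * Dv 3 φ y)) - 3 * ζ * (Dv 1 φ y * Dv 4 φ y)
    + 2 * ζ * (y * (Dv 1 φ y * Dv 5 φ y)) + y * (Dv 2 φ y * Dv 2 φ y)
    + 5 * ζ * (Dv 2 φ y * Dv 3 φ y) - 2 * ζ * (y * (Dv 2 φ y * Dv 4 φ y))
    + ζ * (y * (Dv 3 φ y * Dv 3 φ y)) + 2 * (Dv 1 φ y * Dv 3 φ y)
    - Dv 2 φ y * Dv 2 φ y - 2 * ζ * (Dv 1 φ y * Dv 5 φ y)
    + 2 * ζ * (Dv 2 φ y * Dv 4 φ y) - ζ * (Dv 3 φ y * Dv 3 φ y)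
    - μ * (φ y * φ y) with hHdef
  have hH : ∀ x ∈ Icc (0:ℝ) 1,
      HasDerivWithinAt H
        (4 * (Dv 2 φ x * Dv 2 φ x) + 6 * ζ * (Dv 3 φ x * Dv 3 φ x)) (Icc (0:ℝ) 1) x := by
    intro x hx
    have d0 : HasDerivWithinAt φ (Dv 1 φ x) (Icc (0:ℝ) 1) x := by
      have := hasDeriv_Dv hreg 0 (by norm_num) hx
      rw [show Dv 0 φ = φ from funext fun y => by simp [Dv]] at this; exact this
    have d1 := hasDeriv_Dv hreg 1 (by norm_num) hx
    have d2 := hasDeriv_Dv hreg 2 (by norm_num) hx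
    have d3 := hasDeriv_Dv hreg 3 (by norm_num) hx
    have d4 := hasDeriv_Dv hreg 4 (by norm_num) hx
    have d5 := hasDeriv_Dv hreg 5 (by norm_num) hx
    have hid : HasDerivWithinAt (fun y : ℝ => y) 1 (Icc (0:ℝ) 1) x := hasDerivWithinAt_id x _
    have c1 := (HasDerivWithinAt.const_mul μ (hid.mul (d0.mul d0))).sub (d0.mul d3)
    have c2 := c1.add (HasDerivWithinAt.const_mul ζ (d0.mul d5))
    have c3 := c2.add (HasDerivWithinAt.const_mul 3 (d1.mul d2))
    have c4 := c3.sub (HasDerivWithinAt.const_mul 2 (hid.mul (d1.mul d3)))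
    have c5 := c4.sub (HasDerivWithinAt.const_mul (3*ζ) (d1.mul d4))
    have c6 := c5.add (HasDerivWithinAt.const_mul (2*ζ) (hid.mul (d1.mul d5)))
    have c7 := c6.add (hid.mul (d2.mul d2))
    have c8 := c7.add (HasDerivWithinAt.const_mul (5*ζ) (d2.mul d3))
    have c9 := c8.sub (HasDerivWithinAt.const_mul (2*ζ) (hid.mul (d2.mul d4)))
    have c10 := c9.add (HasDerivWithinAt.const_mul ζ (hid.mul (d3.mul d3)))
    have c11 := c10.add (HasDerivWithinAt.const_mul 2 (d1.mul d3))
    have c12 := c11.sub (d2.mul d2)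
    have c13 := c12.sub (HasDerivWithinAt.const_mul (2*ζ) (d1.mul d5))
    have c14 := c13.add (HasDerivWithinAt.const_mul (2*ζ) (d2.mul d4))
    have c15 := c14.sub (HasDerivWithinAt.const_mul ζ (d3.mul d3))
    have chain := c15.sub (HasDerivWithinAt.const_mul μ (d0.mul d0))
    rw [hHdef]
    refine chain.congr_deriv ?_
    simp only [Pi.mul_apply, Nat.reduceAdd]
    linear_combination (-((2*x - 2) * Dv 1 φ x + φ x)) * (hode x hx)
  have hcont : ContinuousOn H (Icc (0:ℝ) 1) := fun x hx => (hH x hx).continuousWithinAt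
  have hmono : MonotoneOn H (Icc (0:ℝ) 1) := by
    refine monotoneOn_of_hasDerivWithinAt_nonneg (convex_Icc 0 1) hcont
      (f' := fun x => 4 * (Dv 2 φ x * Dv 2 φ x) + 6 * ζ * (Dv 3 φ x * Dv 3 φ x)) ?_ ?_
    · intro x hx
      exact (hH x (interior_subset hx)).mono interior_subset
    · intro x hx
      have h1 := mul_self_nonneg (Dv 2 φ x)
      have h2 := mul_nonneg hζ.le (mul_self_nonneg (Dv 3 φ x))
      nlinarith
  have hH0 : H 0 = 0 := by
    simp only [hHdef]
    rw [hb0, hb1, hb2, hc]; ring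
  have hH1 : H 1 = 0 := by
    simp only [hHdef]
    rw [h31, h51, h21]; ring
  have hconst : ∀ x ∈ Icc (0:ℝ) 1, H x = 0 := by
    intro x hx
    have hl := hmono (left_mem_Icc.mpr zero_le_one) hx hx.1
    have hr := hmono hx (right_mem_Icc.mpr zero_le_one) hx.2
    rw [hH0] at hl; rw [hH1] at hr; linarith
  have hD2 : ∀ x ∈ Icc (0:ℝ) 1, Dv 2 φ x = 0 := by
    intro x hx
    have hzero : HasDerivWithinAt H 0 (Icc (0:ℝ) 1) x :=
      (hasDerivWithinAt_const x (Icc (0:ℝ) 1) (0:ℝ)).congr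
        (fun y hy => hconst y hy) (hconst x hx)
    have e1 := (hH x hx).derivWithin (hu x hx)
    have e2 := hzero.derivWithin (hu x hx)
    have e3 : 4 * (Dv 2 φ x * Dv 2 φ x) + 6 * ζ * (Dv 3 φ x * Dv 3 φ x) = 0 := by
      rw [← e1, e2]
    have h1 := mul_self_nonneg (Dv 2 φ x)
    have h2 := mul_nonneg hζ.le (mul_self_nonneg (Dv 3 φ x))
    have h3 : Dv 2 φ x * Dv 2 φ x = 0 := by nlinarith
    exact mul_self_eq_zero.mp h3
  have hD1 : ∀ x ∈ Icc (0:ℝ) 1, Dv 1 φ x = 0 := by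
    have hdiff : DifferentiableOn ℝ (Dv 1 φ) (Icc (0:ℝ) 1) := fun x hx =>
      (hasDeriv_Dv hreg 1 (by norm_num) hx).differentiableWithinAt
    have hder0 : ∀ x ∈ Ico (0:ℝ) 1, derivWithin (Dv 1 φ) (Icc (0:ℝ) 1) x = 0 := by
      intro x hx
      have hx' : x ∈ Icc (0:ℝ) 1 := Ico_subset_Icc_self hx
      rw [(hasDeriv_Dv hreg 1 (by norm_num) hx').derivWithin (hu x hx')]
      exact hD2 x hx'
    intro x hx
    rw [constant_of_derivWithin_zero hdiff hder0 x hx, hb1]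
  intro x hx
  have hdiff : DifferentiableOn ℝ φ (Icc (0:ℝ) 1) := hreg.differentiableOn (by norm_num)
  have hder0 : ∀ y ∈ Ico (0:ℝ) 1, derivWithin φ (Icc (0:ℝ) 1) y = 0 := by
    intro y hy
    have hy' : y ∈ Icc (0:ℝ) 1 := Ico_subset_Icc_self hy
    have : Dv 1 φ y = derivWithin φ (Icc (0:ℝ) 1) y := congrFun iteratedDerivWithin_one y
    rw [← this]
    exact hD1 y hy'
  rw [constant_of_derivWithin_zero hdiff hder0 x hx, hb0]
end

section
/- Let ζ > 0 and let (μ, φ₁) and (μ, φ₂) be eigenpairs of the beam problem with the same eigenvalue μ. Then φ₁ and φ₂ are linearly dependent on [0,1]: the function φ(x) = φ₁‴(0) φ₂(x) − φ₂‴(0) φ₁(x) vanishes identically on [0,1]. Hence every eigenvalue of the beam problem is geometrically simple. -/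
open Set MeasureTheory intervalIntegral

namespace BeamSimple
open Filter Topology
variable {ζ μ : ℝ} {f g : ℝ → ℝ}

lemma udo : UniqueDiffOn ℝ (Icc (0:ℝ) 1) := uniqueDiffOn_Icc one_pos

lemma contOn (hs : ContDiffOn ℝ 6 f (Icc 0 1)) {m : ℕ} (hm : m ≤ 6) :
    ContinuousOn (Dv m f) (Icc 0 1) :=
  hs.continuousOn_iteratedDerivWithin (by exact_mod_cast hm) udo

lemma hasD (hs : ContDiffOn ℝ 6 f (Icc 0 1)) {m : ℕ} (hm : m < 6) {x : ℝ}
    (hx : x ∈ Ioo (0:ℝ) 1) : HasDerivAt (Dv m f) (Dv (m+1) f x) x := by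
  have hx' : x ∈ Icc (0:ℝ) 1 := Ioo_subset_Icc_self hx
  have hdiff : DifferentiableWithinAt ℝ (Dv m f) (Icc 0 1) x :=
    (hs.differentiableOn_iteratedDerivWithin (by exact_mod_cast hm) udo) x hx'
  have h2 := hdiff.hasDerivWithinAt.hasDerivAt (Icc_mem_nhds hx.1 hx.2)
  have h3 : Dv (m+1) f x = derivWithin (Dv m f) (Icc (0:ℝ) 1) x := by
    simp only [Dv]; exact congrFun iteratedDerivWithin_succ x
  rwa [h3]

lemma hasD0 (hs : ContDiffOn ℝ 6 f (Icc 0 1)) {x : ℝ} (hx : x ∈ Ioo (0:ℝ) 1) :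
    HasDerivAt f (Dv 1 f x) x := by
  have := hasD hs (by norm_num : 0 < 6) hx
  rwa [show Dv 0 f = f from iteratedDerivWithin_zero] at this

lemma ftc01 {F G : ℝ → ℝ} (hF : ContinuousOn F (Icc 0 1))
    (hd : ∀ x ∈ Ioo (0:ℝ) 1, HasDerivAt F (G x) x)
    (hG : ContinuousOn G (Icc 0 1)) {b : ℝ} (hb : b ∈ Icc (0:ℝ) 1) :
    ∫ x in (0:ℝ)..b, G x = F b - F 0 := by
  have hsub : Icc (0:ℝ) b ⊆ Icc 0 1 := Icc_subset_Icc le_rfl hb.2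
  refine integral_eq_sub_of_hasDeriv_right_of_le hb.1 (hF.mono hsub) ?_ ?_
  · intro x hx
    exact (hd x ⟨hx.1, lt_of_lt_of_le hx.2 hb.2⟩).hasDerivWithinAt
  · refine ContinuousOn.intervalIntegrable ?_
    rw [uIcc_of_le hb.1]; exact hG.mono hsub

/-- solutions of the beam ODE satisfying all boundary conditions except possibly nontriviality -/
structure Sol (ζ μ : ℝ) (f : ℝ → ℝ) : Prop where
  smooth : ContDiffOn ℝ 6 f (Icc 0 1)
  ode : ∀ x ∈ Icc (0:ℝ) 1, Dv 4 f x - ζ * Dv 6 f x = μ * f x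
  h00 : f 0 = 0
  h10 : Dv 1 f 0 = 0
  h20 : Dv 2 f 0 = 0
  h31 : Dv 3 f 1 = 0
  h51 : Dv 5 f 1 = 0
  h21 : Dv 2 f 1 = ζ * Dv 4 f 1



/-- energy identity -/
lemma energy (h : Sol ζ μ f) :
    ∫ x in (0:ℝ)..1, (Dv 2 f x ^ 2 + ζ * Dv 3 f x ^ 2 - μ * f x ^ 2) = 0 := by
  have c0 : ContinuousOn f (Icc (0:ℝ) 1) := h.smooth.continuousOn
  have c1 : ContinuousOn (Dv 1 f) (Icc (0:ℝ) 1) := contOn h.smooth (by norm_num)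
  have c2 : ContinuousOn (Dv 2 f) (Icc (0:ℝ) 1) := contOn h.smooth (by norm_num)
  have c3 : ContinuousOn (Dv 3 f) (Icc (0:ℝ) 1) := contOn h.smooth (by norm_num)
  have c4 : ContinuousOn (Dv 4 f) (Icc (0:ℝ) 1) := contOn h.smooth (by norm_num)
  have c5 : ContinuousOn (Dv 5 f) (Icc (0:ℝ) 1) := contOn h.smooth (by norm_num)
  set En : ℝ → ℝ := fun t =>
    ζ * ((f t * Dv 5 f t - Dv 1 f t * Dv 4 f t) + Dv 2 f t * Dv 3 f t)
      - f t * Dv 3 f t + Dv 1 f t * Dv 2 f t with hEn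
  have hd : ∀ x ∈ Ioo (0:ℝ) 1,
      HasDerivAt En (Dv 2 f x ^ 2 + ζ * Dv 3 f x ^ 2 - μ * f x ^ 2) x := by
    intro x hx
    have e := h.ode x (Ioo_subset_Icc_self hx)
    have d0 := hasD0 h.smooth hx
    have d1 : HasDerivAt (Dv 1 f) (Dv 2 f x) x := hasD h.smooth (by norm_num) hx
    have d2 : HasDerivAt (Dv 2 f) (Dv 3 f x) x := hasD h.smooth (by norm_num) hx
    have d3 : HasDerivAt (Dv 3 f) (Dv 4 f x) x := hasD h.smooth (by norm_num) hx
    have d4 : HasDerivAt (Dv 4 f) (Dv 5 f x) x := hasD h.smooth (by norm_num) hx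
    have d5 : HasDerivAt (Dv 5 f) (Dv 6 f x) x := hasD h.smooth (by norm_num) hx
    have H := ((((((d0.mul d5).sub (d1.mul d4)).add (d2.mul d3)).const_mul ζ).sub
      (d0.mul d3)).add (d1.mul d2))
    refine H.congr_deriv (Eq.symm ?_)
    linear_combination (f x) * e
  have hc := ftc01 (F := En) (G := fun x => Dv 2 f x ^ 2 + ζ * Dv 3 f x ^ 2 - μ * f x ^ 2)
    (by fun_prop) hd (by fun_prop) (right_mem_Icc.mpr zero_le_one)
  rw [hc, hEn]
  simp only []
  rw [h.h00, h.h10, h.h20, h.h31, h.h51, h.h21]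
  ring

/-- Pohozaev-type identity in the degenerate case `f 1 = 0`, `f'' 1 = 0` -/
lemma poho (hζ : 0 < ζ) (h : Sol ζ μ f) (hp : f 1 = 0) (hr : Dv 2 f 1 = 0) :
    ∫ x in (0:ℝ)..1,
      (3/2 * Dv 2 f x ^ 2 + 5*ζ/2 * Dv 3 f x ^ 2 + μ/2 * f x ^ 2) = 0 := by
  have h41 : Dv 4 f 1 = 0 := by
    have h21 := h.h21; rw [hr] at h21
    exact (mul_eq_zero.mp h21.symm).resolve_left (ne_of_gt hζ)
  have c0 : ContinuousOn f (Icc (0:ℝ) 1) := h.smooth.continuousOn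
  have c1 : ContinuousOn (Dv 1 f) (Icc (0:ℝ) 1) := contOn h.smooth (by norm_num)
  have c2 : ContinuousOn (Dv 2 f) (Icc (0:ℝ) 1) := contOn h.smooth (by norm_num)
  have c3 : ContinuousOn (Dv 3 f) (Icc (0:ℝ) 1) := contOn h.smooth (by norm_num)
  have c4 : ContinuousOn (Dv 4 f) (Icc (0:ℝ) 1) := contOn h.smooth (by norm_num)
  have c5 : ContinuousOn (Dv 5 f) (Icc (0:ℝ) 1) := contOn h.smooth (by norm_num)
  set Big : ℝ → ℝ := fun t =>
    ζ * ((((t * Dv 1 f t * Dv 5 f t - Dv 1 f t * Dv 4 f t) - t * Dv 2 f t * Dv 4 f t)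
        + 2 * (Dv 2 f t * Dv 3 f t)) + t * Dv 3 f t * Dv 3 f t / 2)
      - t * Dv 1 f t * Dv 3 f t + Dv 1 f t * Dv 2 f t + t * Dv 2 f t * Dv 2 f t / 2
      + μ * (t * f t * f t) / 2 with hBig
  have hd : ∀ x ∈ Ioo (0:ℝ) 1,
      HasDerivAt Big (3/2 * Dv 2 f x ^ 2 + 5*ζ/2 * Dv 3 f x ^ 2 + μ/2 * f x ^ 2) x := by
    intro x hx
    have e := h.ode x (Ioo_subset_Icc_self hx)
    have d0 := hasD0 h.smooth hx
    have d1 : HasDerivAt (Dv 1 f) (Dv 2 f x) x := hasD h.smooth (by norm_num) hx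
    have d2 : HasDerivAt (Dv 2 f) (Dv 3 f x) x := hasD h.smooth (by norm_num) hx
    have d3 : HasDerivAt (Dv 3 f) (Dv 4 f x) x := hasD h.smooth (by norm_num) hx
    have d4 : HasDerivAt (Dv 4 f) (Dv 5 f x) x := hasD h.smooth (by norm_num) hx
    have d5 : HasDerivAt (Dv 5 f) (Dv 6 f x) x := hasD h.smooth (by norm_num) hx
    have hid : HasDerivAt (fun t : ℝ => t) 1 x := hasDerivAt_id x
    have T1 := (hid.mul d1).mul d5
    have T2 := d1.mul d4
    have T3 := (hid.mul d2).mul d4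
    have T4 := (d2.mul d3).const_mul (2:ℝ)
    have T5 := ((hid.mul d3).mul d3).div_const (2:ℝ)
    have A := ((((T1.sub T2).sub T3).add T4).add T5).const_mul ζ
    have T6 := (hid.mul d1).mul d3
    have T7 := d1.mul d2
    have T8 := ((hid.mul d2).mul d2).div_const (2:ℝ)
    have T9 := (((hid.mul d0).mul d0).const_mul μ).div_const (2:ℝ)
    have H := (((A.sub T6).add T7).add T8).add T9
    refine H.congr_deriv (Eq.symm ?_); simp only [Pi.mul_apply]
    linear_combination (x * Dv 1 f x) * e
  have hc := ftc01 (F := Big)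
    (G := fun x => 3/2 * Dv 2 f x ^ 2 + 5*ζ/2 * Dv 3 f x ^ 2 + μ/2 * f x ^ 2)
    (by fun_prop) hd (by fun_prop) (right_mem_Icc.mpr zero_le_one)
  rw [hc, hBig]
  simp only []
  rw [h.h00, h.h10, h.h20, h.h31, h.h51, hp, hr, h41]
  ring

/-- conserved bilinear form: relation between third derivatives at `0`
and values at `1` -/
lemma wcons (hf : Sol ζ μ f) (hg : Sol ζ μ g) :
    ζ * (Dv 3 f 0 * Dv 3 g 0) = μ * (f 1 * g 1) - Dv 2 f 1 * Dv 2 g 1 := by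
  have c0f : ContinuousOn f (Icc (0:ℝ) 1) := hf.smooth.continuousOn
  have c1f : ContinuousOn (Dv 1 f) (Icc (0:ℝ) 1) := contOn hf.smooth (by norm_num)
  have c2f : ContinuousOn (Dv 2 f) (Icc (0:ℝ) 1) := contOn hf.smooth (by norm_num)
  have c3f : ContinuousOn (Dv 3 f) (Icc (0:ℝ) 1) := contOn hf.smooth (by norm_num)
  have c4f : ContinuousOn (Dv 4 f) (Icc (0:ℝ) 1) := contOn hf.smooth (by norm_num)
  have c5f : ContinuousOn (Dv 5 f) (Icc (0:ℝ) 1) := contOn hf.smooth (by norm_num)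
  have c0g : ContinuousOn g (Icc (0:ℝ) 1) := hg.smooth.continuousOn
  have c1g : ContinuousOn (Dv 1 g) (Icc (0:ℝ) 1) := contOn hg.smooth (by norm_num)
  have c2g : ContinuousOn (Dv 2 g) (Icc (0:ℝ) 1) := contOn hg.smooth (by norm_num)
  have c3g : ContinuousOn (Dv 3 g) (Icc (0:ℝ) 1) := contOn hg.smooth (by norm_num)
  have c4g : ContinuousOn (Dv 4 g) (Icc (0:ℝ) 1) := contOn hg.smooth (by norm_num)
  have c5g : ContinuousOn (Dv 5 g) (Icc (0:ℝ) 1) := contOn hg.smooth (by norm_num)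
  set W : ℝ → ℝ := fun t =>
    ζ * (((((Dv 5 f t * Dv 1 g t + Dv 5 g t * Dv 1 f t) - Dv 4 f t * Dv 2 g t) -
      Dv 4 g t * Dv 2 f t) + Dv 3 f t * Dv 3 g t))
      - (Dv 3 f t * Dv 1 g t + Dv 3 g t * Dv 1 f t) + Dv 2 f t * Dv 2 g t
      + μ * (f t * g t) with hW
  have hd : ∀ x ∈ Ioo (0:ℝ) 1, HasDerivAt W ((fun _ : ℝ => (0:ℝ)) x) x := by
    intro x hx
    have ef := hf.ode x (Ioo_subset_Icc_self hx)
    have eg := hg.ode x (Ioo_subset_Icc_self hx)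
    have f0 := hasD0 hf.smooth hx
    have f1 : HasDerivAt (Dv 1 f) (Dv 2 f x) x := hasD hf.smooth (by norm_num) hx
    have f2 : HasDerivAt (Dv 2 f) (Dv 3 f x) x := hasD hf.smooth (by norm_num) hx
    have f3 : HasDerivAt (Dv 3 f) (Dv 4 f x) x := hasD hf.smooth (by norm_num) hx
    have f4 : HasDerivAt (Dv 4 f) (Dv 5 f x) x := hasD hf.smooth (by norm_num) hx
    have f5 : HasDerivAt (Dv 5 f) (Dv 6 f x) x := hasD hf.smooth (by norm_num) hx
    have g0 := hasD0 hg.smooth hx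
    have g1 : HasDerivAt (Dv 1 g) (Dv 2 g x) x := hasD hg.smooth (by norm_num) hx
    have g2 : HasDerivAt (Dv 2 g) (Dv 3 g x) x := hasD hg.smooth (by norm_num) hx
    have g3 : HasDerivAt (Dv 3 g) (Dv 4 g x) x := hasD hg.smooth (by norm_num) hx
    have g4 : HasDerivAt (Dv 4 g) (Dv 5 g x) x := hasD hg.smooth (by norm_num) hx
    have g5 : HasDerivAt (Dv 5 g) (Dv 6 g x) x := hasD hg.smooth (by norm_num) hx
    have T1 := (f5.mul g1).add (g5.mul f1)
    have T2 := f4.mul g2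
    have T3 := g4.mul f2
    have T4 := f3.mul g3
    have A := ((((T1.sub T2).sub T3).add T4).const_mul ζ)
    have T5 := (f3.mul g1).add (g3.mul f1)
    have T6 := f2.mul g2
    have T7 := (f0.mul g0).const_mul μ
    have H := ((A.sub T5).add T6).add T7
    refine H.congr_deriv (Eq.symm ?_)
    linear_combination (Dv 1 g x) * ef + (Dv 1 f x) * eg
  have hc := ftc01 (F := W) (G := fun _ : ℝ => (0:ℝ))
    (by fun_prop) hd continuousOn_const (right_mem_Icc.mpr zero_le_one)
  rw [intervalIntegral.integral_zero] at hc
  have hW1 : W 1 = W 0 := by linarith [hc]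
  rw [hW] at hW1
  simp only [] at hW1
  rw [hf.h00, hf.h10, hf.h20, hf.h31, hf.h51,
    hg.h00, hg.h10, hg.h20, hg.h31, hg.h51] at hW1
  linear_combination (-1 : ℝ) * hW1 + Dv 2 g 1 * hf.h21 + Dv 2 f 1 * hg.h21


lemma vanish_of_integral_zero {g : ℝ → ℝ} (hc : ContinuousOn g (Icc 0 1))
    (hnn : ∀ x ∈ Icc (0:ℝ) 1, 0 ≤ g x) (hz : ∫ x in (0:ℝ)..1, g x = 0) :
    ∀ x ∈ Icc (0:ℝ) 1, g x = 0 := by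
  have hIoo : ∀ x ∈ Ioo (0:ℝ) 1, g x = 0 := by
    intro x hx
    by_contra hne
    have hpos : 0 < g x := lt_of_le_of_ne (hnn x (Ioo_subset_Icc_self hx)) (Ne.symm hne)
    have hca : ContinuousAt g x := hc.continuousAt (Icc_mem_nhds hx.1 hx.2)
    have hev : ∀ᶠ y in 𝓝 x, 0 < g y := hca.eventually_const_lt hpos
    obtain ⟨c, d, hcd, hsub⟩ := mem_nhds_iff_exists_Ioo_subset.mp hev
    set c' := max c 0 with hc'
    set d' := min d 1 with hd'
    have hc'x : c' < x := max_lt hcd.1 hx.1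
    have hxd' : x < d' := lt_min hcd.2 hx.2
    have hc'd' : c' < d' := hc'x.trans hxd'
    have hc'mem : c' ∈ Icc (0:ℝ) 1 := ⟨le_max_right _ _, le_of_lt (hc'x.trans_le hx.2.le)⟩
    have hd'mem : d' ∈ Icc (0:ℝ) 1 := ⟨le_of_lt (lt_of_le_of_lt hx.1.le hxd'), min_le_right _ _⟩
    have hint : ∀ a b : ℝ, a ∈ Icc (0:ℝ) 1 → b ∈ Icc (0:ℝ) 1 → a ≤ b →
        IntervalIntegrable g volume a b := by
      intro a b ha hb hab
      refine ContinuousOn.intervalIntegrable ?_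
      rw [uIcc_of_le hab]; exact hc.mono (Icc_subset_Icc ha.1 hb.2)
    have hmidpos : 0 < ∫ y in c'..d', g y := by
      refine intervalIntegral_pos_of_pos_on (hint _ _ hc'mem hd'mem hc'd'.le) ?_ hc'd'
      intro y hy
      exact hsub ⟨lt_of_le_of_lt (le_max_left _ _) hy.1, lt_of_lt_of_le hy.2 (min_le_left _ _)⟩
    have h1 : 0 ≤ ∫ y in (0:ℝ)..c', g y := by
      refine intervalIntegral.integral_nonneg hc'mem.1 ?_
      intro u hu; exact hnn u ⟨hu.1, hu.2.trans hc'mem.2⟩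
    have h3 : 0 ≤ ∫ y in d'..1, g y := by
      refine intervalIntegral.integral_nonneg hd'mem.2 ?_
      intro u hu; exact hnn u ⟨hd'mem.1.trans hu.1, hu.2⟩
    have e1 : ∫ y in (0:ℝ)..d', g y = (∫ y in (0:ℝ)..c', g y) + ∫ y in c'..d', g y :=
      (integral_add_adjacent_intervals (hint _ _ ⟨le_rfl, zero_le_one⟩ hc'mem hc'mem.1)
        (hint _ _ hc'mem hd'mem hc'd'.le)).symm
    have e2 : ∫ y in (0:ℝ)..1, g y = (∫ y in (0:ℝ)..d', g y) + ∫ y in d'..1, g y :=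
      (integral_add_adjacent_intervals (hint _ _ ⟨le_rfl, zero_le_one⟩ hd'mem hd'mem.1)
        (hint _ _ hd'mem ⟨zero_le_one, le_rfl⟩ hd'mem.2)).symm
    rw [e2, e1] at hz
    linarith
  intro x hx
  rcases eq_or_lt_of_le hx.1 with h0 | h0
  · -- x = 0
    have hne : (𝓝[Ioo (0:ℝ) 1] (0:ℝ)).NeBot := by
      rw [← mem_closure_iff_nhdsWithin_neBot, closure_Ioo (by norm_num : (0:ℝ) ≠ 1)]
      exact ⟨le_rfl, zero_le_one⟩
    have t1 : Tendsto g (𝓝[Ioo (0:ℝ) 1] 0) (𝓝 (g 0)) :=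
      ((hc 0 ⟨le_rfl, zero_le_one⟩).mono Ioo_subset_Icc_self)
    have t2 : Tendsto g (𝓝[Ioo (0:ℝ) 1] 0) (𝓝 0) := by
      refine Tendsto.congr' ?_ tendsto_const_nhds
      filter_upwards [self_mem_nhdsWithin] with y hy
      exact (hIoo y hy).symm
    rw [← h0]
    exact tendsto_nhds_unique t1 t2
  rcases eq_or_lt_of_le hx.2 with h1 | h1
  · -- x = 1
    have hne : (𝓝[Ioo (0:ℝ) 1] (1:ℝ)).NeBot := by
      rw [← mem_closure_iff_nhdsWithin_neBot, closure_Ioo (by norm_num : (0:ℝ) ≠ 1)]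
      exact ⟨zero_le_one, le_rfl⟩
    have t1 : Tendsto g (𝓝[Ioo (0:ℝ) 1] 1) (𝓝 (g 1)) :=
      ((hc 1 ⟨zero_le_one, le_rfl⟩).mono Ioo_subset_Icc_self)
    have t2 : Tendsto g (𝓝[Ioo (0:ℝ) 1] 1) (𝓝 0) := by
      refine Tendsto.congr' ?_ tendsto_const_nhds
      filter_upwards [self_mem_nhdsWithin] with y hy
      exact (hIoo y hy).symm
    rw [h1]
    exact tendsto_nhds_unique t1 t2
  · exact hIoo x ⟨h0, h1⟩

lemma zero_of_dv2 (h : Sol ζ μ f) (h2 : ∀ x ∈ Icc (0:ℝ) 1, Dv 2 f x = 0) :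
    ∀ x ∈ Icc (0:ℝ) 1, f x = 0 := by
  have h1 : ∀ x ∈ Icc (0:ℝ) 1, Dv 1 f x = 0 := by
    intro b hb
    have hftc := ftc01 (F := Dv 1 f) (G := Dv 2 f) (contOn h.smooth (by norm_num))
      (fun x hx => hasD h.smooth (by norm_num) hx) (contOn h.smooth (by norm_num)) hb
    have hzero : ∫ x in (0:ℝ)..b, Dv 2 f x = 0 := by
      rw [intervalIntegral.integral_congr (g := fun _ => (0:ℝ))
        (fun y hy => by
          rw [uIcc_of_le hb.1] at hy
          exact h2 y ⟨hy.1, hy.2.trans hb.2⟩)]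
      simp
    rw [hzero] at hftc
    have := h.h10
    linarith
  intro b hb
  have hftc := ftc01 (F := f) (G := Dv 1 f) h.smooth.continuousOn
    (fun x hx => hasD0 h.smooth hx) (contOn h.smooth (by norm_num)) hb
  have hzero : ∫ x in (0:ℝ)..b, Dv 1 f x = 0 := by
    rw [intervalIntegral.integral_congr (g := fun _ => (0:ℝ))
      (fun y hy => by
        rw [uIcc_of_le hb.1] at hy
        exact h1 y ⟨hy.1, hy.2.trans hb.2⟩)]
    simp
  rw [hzero] at hftc
  have := h.h00
  linarith

lemma dv_lin (hf : ContDiffOn ℝ 6 f (Icc 0 1)) (hg : ContDiffOn ℝ 6 g (Icc 0 1))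
    (a b : ℝ) {m : ℕ} (hm : m ≤ 6) {x : ℝ} (hx : x ∈ Icc (0:ℝ) 1) :
    Dv m (fun t => a * f t + b * g t) x = a * Dv m f x + b * Dv m g x := by
  have hm' : (m : WithTop ℕ∞) ≤ 6 := by exact_mod_cast hm
  have hf' : ContDiffOn ℝ m (fun t => a * f t) (Icc (0:ℝ) 1) :=
    (contDiffOn_const.mul hf).of_le hm'
  have hg' : ContDiffOn ℝ m (fun t => b * g t) (Icc (0:ℝ) 1) :=
    (contDiffOn_const.mul hg).of_le hm'
  have e1 : (fun t => a * f t + b * g t) = ((fun t => a * f t) + fun t => b * g t) := rfl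
  simp only [Dv]
  rw [e1, iteratedDerivWithin_add hx udo (hf' x hx) (hg' x hx),
    iteratedDerivWithin_const_mul hx udo a ((hf.of_le hm') x hx),
    iteratedDerivWithin_const_mul hx udo b ((hg.of_le hm') x hx)]




lemma sol_of_eigen {ζ μ : ℝ} {φ : ℝ → ℝ} (hζ : 0 < ζ) (h : BeamEigenpair ζ μ φ) :
    Sol ζ μ φ := by
  obtain ⟨hs, ⟨b00, b10, b20, b41, b51, b31⟩, hnz, hode⟩ := h
  have h31 : Dv 3 φ 1 = 0 := (mul_eq_zero.mp b31).resolve_left (ne_of_gt hζ)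
  refine ⟨hs, hode, b00, b10, b20, h31, ?_, by linarith⟩
  have : ζ * Dv 5 φ 1 = 0 := by rw [h31] at b51; linarith
  exact (mul_eq_zero.mp this).resolve_left (ne_of_gt hζ)

theorem main (ζ : ℝ) (hζ : 0 < ζ) (μ : ℝ) (φ₁ φ₂ : ℝ → ℝ)
    (h₁ : BeamEigenpair ζ μ φ₁) (h₂ : BeamEigenpair ζ μ φ₂) :
    ∀ x ∈ Icc (0:ℝ) 1, Dv 3 φ₁ 0 * φ₂ x - Dv 3 φ₂ 0 * φ₁ x = 0 := by
  have hζ' : ζ ≠ 0 := ne_of_gt hζ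
  have S1 : Sol ζ μ φ₁ := sol_of_eigen hζ h₁
  have S2 : Sol ζ μ φ₂ := sol_of_eigen hζ h₂
  obtain ⟨hs1, -, hnz1, hode1⟩ := h₁
  obtain ⟨hs2, -, hnz2, hode2⟩ := h₂
  set c₁ := Dv 3 φ₁ 0 with hc1
  set c₂ := Dv 3 φ₂ 0 with hc2
  obtain ⟨ψ, hψdef⟩ : ∃ ψ : ℝ → ℝ, ψ = fun t => c₁ * φ₂ t + (-c₂) * φ₁ t := ⟨_, rfl⟩
  have hψapp : ∀ t, ψ t = c₁ * φ₂ t + (-c₂) * φ₁ t := fun t => by rw [hψdef]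
  have hsψ : ContDiffOn ℝ 6 ψ (Icc (0:ℝ) 1) := by
    rw [hψdef]; exact (contDiffOn_const.mul hs2).add (contDiffOn_const.mul hs1)
  have hdvψ : ∀ (m : ℕ), m ≤ 6 → ∀ x ∈ Icc (0:ℝ) 1,
      Dv m ψ x = c₁ * Dv m φ₂ x + (-c₂) * Dv m φ₁ x :=
    fun m hm x hx => by rw [hψdef]; exact dv_lin hs2 hs1 c₁ (-c₂) hm hx
  have mem0 : (0:ℝ) ∈ Icc (0:ℝ) 1 := ⟨le_rfl, zero_le_one⟩
  have mem1 : (1:ℝ) ∈ Icc (0:ℝ) 1 := ⟨zero_le_one, le_rfl⟩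
  have Sψ : Sol ζ μ ψ := by
    refine ⟨hsψ, ?_, ?_, ?_, ?_, ?_, ?_, ?_⟩
    · intro x hx
      rw [hdvψ 4 (by norm_num) x hx, hdvψ 6 (by norm_num) x hx]
      have e1 := hode1 x hx
      have e2 := hode2 x hx
      rw [hψapp x]
      linear_combination c₁ * e2 + (-c₂) * e1
    · rw [hψapp 0, S1.h00, S2.h00]; ring
    · rw [hdvψ 1 (by norm_num) 0 mem0, S1.h10, S2.h10]; ring
    · rw [hdvψ 2 (by norm_num) 0 mem0, S1.h20, S2.h20]; ring
    · rw [hdvψ 3 (by norm_num) 1 mem1, S1.h31, S2.h31]; ring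
    · rw [hdvψ 5 (by norm_num) 1 mem1, S1.h51, S2.h51]; ring
    · rw [hdvψ 2 (by norm_num) 1 mem1, hdvψ 4 (by norm_num) 1 mem1, S1.h21, S2.h21]; ring
  have hψ30 : Dv 3 ψ 0 = 0 := by
    rw [hdvψ 3 (by norm_num) 0 mem0, ← hc1, ← hc2]; ring
  -- positivity of the eigenvalue
  have hμ : 0 < μ := by
    by_contra hle
    push_neg at hle
    have hE := energy S1
    have hnn : ∀ x ∈ Icc (0:ℝ) 1,
        0 ≤ Dv 2 φ₁ x ^ 2 + ζ * Dv 3 φ₁ x ^ 2 - μ * φ₁ x ^ 2 := by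
      intro x _
      nlinarith [sq_nonneg (Dv 2 φ₁ x), sq_nonneg (Dv 3 φ₁ x), sq_nonneg (φ₁ x),
        mul_nonneg hζ.le (sq_nonneg (Dv 3 φ₁ x)),
        mul_nonneg (neg_nonneg.mpr hle) (sq_nonneg (φ₁ x))]
    have c0 : ContinuousOn φ₁ (Icc (0:ℝ) 1) := hs1.continuousOn
    have c2 : ContinuousOn (Dv 2 φ₁) (Icc (0:ℝ) 1) := contOn hs1 (by norm_num)
    have c3 : ContinuousOn (Dv 3 φ₁) (Icc (0:ℝ) 1) := contOn hs1 (by norm_num)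
    have hvan := vanish_of_integral_zero (by fun_prop) hnn hE
    have h2z : ∀ x ∈ Icc (0:ℝ) 1, Dv 2 φ₁ x = 0 := by
      intro x hx
      have hv := hvan x hx
      have hsq : Dv 2 φ₁ x ^ 2 = 0 := by
        nlinarith [mul_nonneg hζ.le (sq_nonneg (Dv 3 φ₁ x)),
          mul_nonneg (neg_nonneg.mpr hle) (sq_nonneg (φ₁ x)), sq_nonneg (Dv 2 φ₁ x)]
      exact (pow_eq_zero_iff two_ne_zero).mp hsq
    exact hnz1 (zero_of_dv2 S1 h2z)
  by_cases hp : ψ 1 = 0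
  · -- degenerate case: Pohozaev identity kills ψ
    have hr : Dv 2 ψ 1 = 0 := by
      have w := wcons Sψ Sψ
      rw [hψ30, hp] at w
      have hsq : Dv 2 ψ 1 ^ 2 = 0 := by nlinarith [w]
      exact (pow_eq_zero_iff two_ne_zero).mp hsq
    have hP := poho hζ Sψ hp hr
    have hnn : ∀ x ∈ Icc (0:ℝ) 1,
        0 ≤ 3/2 * Dv 2 ψ x ^ 2 + 5*ζ/2 * Dv 3 ψ x ^ 2 + μ/2 * ψ x ^ 2 := by
      intro x _
      have h1 : (0:ℝ) ≤ 5*ζ/2 * Dv 3 ψ x ^ 2 := by positivity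
      have h2 : (0:ℝ) ≤ μ/2 * ψ x ^ 2 := by positivity
      nlinarith [sq_nonneg (Dv 2 ψ x)]
    have c0 : ContinuousOn ψ (Icc (0:ℝ) 1) := hsψ.continuousOn
    have c2 : ContinuousOn (Dv 2 ψ) (Icc (0:ℝ) 1) := contOn hsψ (by norm_num)
    have c3 : ContinuousOn (Dv 3 ψ) (Icc (0:ℝ) 1) := contOn hsψ (by norm_num)
    have hvan := vanish_of_integral_zero (by fun_prop) hnn hP
    intro x hx
    have hv := hvan x hx
    have hsq : ψ x ^ 2 = 0 := by
      nlinarith [hμ, sq_nonneg (Dv 2 ψ x), mul_nonneg hζ.le (sq_nonneg (Dv 3 ψ x)),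
        sq_nonneg (ψ x)]
    have hψx : ψ x = 0 := (pow_eq_zero_iff two_ne_zero).mp hsq
    rw [hψapp x] at hψx
    linarith
  · -- nondegenerate case is impossible: both c₁ and c₂ vanish
    exfalso
    have hψ1sq : 0 < μ * ψ 1 ^ 2 :=
      mul_pos hμ (lt_of_le_of_ne (sq_nonneg _) (Ne.symm (pow_ne_zero 2 hp)))
    have wps := wcons Sψ Sψ
    rw [hψ30] at wps
    have hkey : ∀ (φ : ℝ → ℝ), Sol ζ μ φ → Dv 3 ψ 0 = 0 → Dv 3 φ 0 = 0 → True := fun _ _ _ _ => trivial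
    -- c₁ = 0
    have hc10 : c₁ = 0 := by
      have w1 := wcons Sψ S1
      rw [hψ30] at w1
      have h1 : μ * (ψ 1 * φ₁ 1) = Dv 2 ψ 1 * Dv 2 φ₁ 1 := by linarith [w1]
      have h2 : Dv 2 ψ 1 ^ 2 = μ * ψ 1 ^ 2 := by nlinarith [wps]
      have h3 : μ * ψ 1 ^ 2 * (μ * φ₁ 1 ^ 2 - Dv 2 φ₁ 1 ^ 2) = 0 := by
        linear_combination (μ * ψ 1 * φ₁ 1 + Dv 2 ψ 1 * Dv 2 φ₁ 1) * h1 + (Dv 2 φ₁ 1 ^ 2) * h2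
      have h4 : μ * φ₁ 1 ^ 2 - Dv 2 φ₁ 1 ^ 2 = 0 :=
        (mul_eq_zero.mp h3).resolve_left (ne_of_gt hψ1sq)
      have w11 := wcons S1 S1
      have h5 : ζ * (c₁ * c₁) = 0 := by linear_combination w11 + h4
      have h6 : c₁ * c₁ = 0 := (mul_eq_zero.mp h5).resolve_left hζ'
      exact (mul_self_eq_zero).mp h6
    have hc20 : c₂ = 0 := by
      have w2 := wcons Sψ S2
      rw [hψ30] at w2
      have h1 : μ * (ψ 1 * φ₂ 1) = Dv 2 ψ 1 * Dv 2 φ₂ 1 := by linarith [w2]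
      have h2 : Dv 2 ψ 1 ^ 2 = μ * ψ 1 ^ 2 := by nlinarith [wps]
      have h3 : μ * ψ 1 ^ 2 * (μ * φ₂ 1 ^ 2 - Dv 2 φ₂ 1 ^ 2) = 0 := by
        linear_combination (μ * ψ 1 * φ₂ 1 + Dv 2 ψ 1 * Dv 2 φ₂ 1) * h1 + (Dv 2 φ₂ 1 ^ 2) * h2
      have h4 : μ * φ₂ 1 ^ 2 - Dv 2 φ₂ 1 ^ 2 = 0 :=
        (mul_eq_zero.mp h3).resolve_left (ne_of_gt hψ1sq)
      have w22 := wcons S2 S2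
      have h5 : ζ * (c₂ * c₂) = 0 := by linear_combination w22 + h4
      have h6 : c₂ * c₂ = 0 := (mul_eq_zero.mp h5).resolve_left hζ'
      exact (mul_self_eq_zero).mp h6
    apply hp
    rw [hψapp 1, hc10, hc20]; ring

end BeamSimple

/-- Two eigenfunctions of the beam problem associated with the same eigenvalue
are linearly dependent on `[0,1]`: `φ₁‴(0) φ₂ − φ₂‴(0) φ₁` vanishes identically
on `[0,1]`. Hence every eigenvalue of the beam problem is geometrically simple. -/
theorem stmt_10 (ζ : ℝ) (hζ : 0 < ζ) (μ : ℝ) (φ₁ φ₂ : ℝ → ℝ)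
    (h₁ : BeamEigenpair ζ μ φ₁) (h₂ : BeamEigenpair ζ μ φ₂) :
    ∀ x ∈ Icc (0:ℝ) 1, Dv 3 φ₁ 0 * φ₂ x - Dv 3 φ₂ 0 * φ₁ x = 0 :=
  BeamSimple.main ζ hζ μ φ₁ φ₂ h₁ h₂
end

section
/- Let ζ > 0 and let (λ², φ) be an eigenpair of the beam problem with eigenvalue written as λ². Then 4 λ² ∫₀¹ (φ(x))² dx ≤ ζ (φ‴(0))² ≤ 6 λ² ∫₀¹ (φ(x))² dx. -/
open Set MeasureTheory intervalIntegral

/-- FTC on `[0,1]` for derivatives within `[0,1]`. -/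
lemma ftc01 {g g' : ℝ → ℝ}
    (hg : ∀ x ∈ Icc (0:ℝ) 1, HasDerivWithinAt g (g' x) (Icc (0:ℝ) 1) x)
    (hc : ContinuousOn g' (Icc (0:ℝ) 1)) :
    ∫ x in (0:ℝ)..1, g' x = g 1 - g 0 := by
  apply integral_eq_sub_of_hasDeriv_right_of_le zero_le_one
    (fun x hx => (hg x hx).continuousWithinAt)
  · intro x hx
    exact (hg x (Ioo_subset_Icc_self hx)).mono_of_mem_nhdsWithin
      (mem_nhdsWithin_of_mem_nhds (Icc_mem_nhds hx.1 hx.2))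
  · exact ContinuousOn.intervalIntegrable (by rwa [uIcc_of_le zero_le_one])

lemma intInt01 {g : ℝ → ℝ} (hc : ContinuousOn g (Icc (0:ℝ) 1)) :
    IntervalIntegrable g volume 0 1 :=
  ContinuousOn.intervalIntegrable (by rwa [uIcc_of_le zero_le_one])

/-- For an eigenpair `(λ², φ)` of the beam problem,
`4 λ² ∫₀¹ φ² ≤ ζ (φ‴(0))² ≤ 6 λ² ∫₀¹ φ²`. -/
theorem stmt_12 (ζ : ℝ) (hζ : 0 < ζ) (lamsq : ℝ) (φ : ℝ → ℝ)
    (h : BeamEigenpair ζ lamsq φ) :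
    4 * lamsq * (∫ x in (0:ℝ)..1, (φ x)^2) ≤ ζ * (Dv 3 φ 0)^2 ∧
    ζ * (Dv 3 φ 0)^2 ≤ 6 * lamsq * ∫ x in (0:ℝ)..1, (φ x)^2 := by
  obtain ⟨hsm, ⟨hb0, hb1, hb2, hb3, hb4, hb5⟩, -, heq⟩ := h
  have hu : UniqueDiffOn ℝ (Icc (0:ℝ) 1) := uniqueDiffOn_Icc zero_lt_one
  have hDv0 : Dv 0 φ = φ := by funext x; simp [Dv]
  -- derivative facts
  have hD : ∀ m : ℕ, m < 6 → ∀ x ∈ Icc (0:ℝ) 1,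
      HasDerivWithinAt (Dv m φ) (Dv (m+1) φ x) (Icc (0:ℝ) 1) x := by
    intro m hm x hx
    have hd := (hsm.differentiableOn_iteratedDerivWithin
      (by exact_mod_cast hm) hu x hx).hasDerivWithinAt
    have : Dv (m+1) φ x = derivWithin (iteratedDerivWithin m φ (Icc (0:ℝ) 1)) (Icc (0:ℝ) 1) x :=
      congrFun iteratedDerivWithin_succ x
    rw [this]
    exact hd
  have hC : ∀ m : ℕ, m ≤ 6 → ContinuousOn (Dv m φ) (Icc (0:ℝ) 1) := by
    intro m hm
    exact hsm.continuousOn_iteratedDerivWithin (by exact_mod_cast hm) hu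
  have hφc : ContinuousOn φ (Icc (0:ℝ) 1) := hsm.continuousOn
  -- boundary facts
  have h31 : Dv 3 φ 1 = 0 := (mul_eq_zero.mp hb5).resolve_left (ne_of_gt hζ)
  have h51 : Dv 5 φ 1 = 0 := by
    have : ζ * Dv 5 φ 1 = 0 := by rw [h31] at hb4; linarith
    exact (mul_eq_zero.mp this).resolve_left (ne_of_gt hζ)
  have h0mem : (0:ℝ) ∈ Icc (0:ℝ) 1 := by constructor <;> norm_num
  have h1mem : (1:ℝ) ∈ Icc (0:ℝ) 1 := by constructor <;> norm_num
  -- First identity : lamsq * ∫φ² = ∫(Dv2)² + ζ ∫(Dv3)²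
  set G1 : ℝ → ℝ := fun x => Dv 3 φ x * φ x - Dv 2 φ x * Dv 1 φ x -
      ζ * (Dv 5 φ x * φ x - Dv 4 φ x * Dv 1 φ x + Dv 3 φ x * Dv 2 φ x) with hG1
  have hG1d : ∀ x ∈ Icc (0:ℝ) 1, HasDerivWithinAt G1
      (lamsq * (φ x)^2 - (Dv 2 φ x)^2 - ζ * (Dv 3 φ x)^2) (Icc (0:ℝ) 1) x := by
    intro x hx
    have h0 := hDv0 ▸ hD 0 (by norm_num) x hx
    have h1 := hD 1 (by norm_num) x hx
    have h2 := hD 2 (by norm_num) x hx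
    have h3 := hD 3 (by norm_num) x hx
    have h4 := hD 4 (by norm_num) x hx
    have h5 := hD 5 (by norm_num) x hx
    have hder := ((h3.mul h0).sub (h2.mul h1)).sub
      ((((h5.mul h0).sub (h4.mul h1)).add (h3.mul h2)).const_mul ζ)
    refine hder.congr_deriv ?_
    linear_combination (φ x) * heq x hx
  have E1 := ftc01 hG1d (by
    apply ContinuousOn.sub
    apply ContinuousOn.sub
    · exact (continuousOn_const.mul (hφc.pow 2))
    · exact (hC 2 (by norm_num)).pow 2
    · exact continuousOn_const.mul ((hC 3 (by norm_num)).pow 2))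
  have hG1val : G1 1 - G1 0 = 0 := by
    simp only [hG1]
    rw [hb0, hb1, hb2, h31, h51]
    linear_combination (-(Dv 1 φ 1)) * hb3
  rw [hG1val] at E1
  -- Second identity : ζ (Dv3 φ 0)² = lamsq ∫φ² + 3∫(Dv2)² + 5ζ∫(Dv3)²
  set G2 : ℝ → ℝ := fun x => lamsq * ((x - 1) * (φ x * φ x)) -
      ((x - 1) * Dv 1 φ x * Dv 3 φ x * 2 - Dv 1 φ x * Dv 2 φ x * 2 -
        (x - 1) * (Dv 2 φ x * Dv 2 φ x)) +
      ζ * ((x - 1) * Dv 1 φ x * Dv 5 φ x * 2 - Dv 1 φ x * Dv 4 φ x * 2 -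
        (x - 1) * Dv 2 φ x * Dv 4 φ x * 2 + Dv 2 φ x * Dv 3 φ x * 4 +
        (x - 1) * (Dv 3 φ x * Dv 3 φ x)) with hG2
  have hG2d : ∀ x ∈ Icc (0:ℝ) 1, HasDerivWithinAt G2
      (lamsq * (φ x)^2 + 3 * (Dv 2 φ x)^2 + 5 * ζ * (Dv 3 φ x)^2) (Icc (0:ℝ) 1) x := by
    intro x hx
    have h0 := hDv0 ▸ hD 0 (by norm_num) x hx
    have h1 := hD 1 (by norm_num) x hx
    have h2 := hD 2 (by norm_num) x hx
    have h3 := hD 3 (by norm_num) x hx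
    have h4 := hD 4 (by norm_num) x hx
    have h5 := hD 5 (by norm_num) x hx
    have hw : HasDerivWithinAt (fun y : ℝ => y - 1) 1 (Icc (0:ℝ) 1) x :=
      (hasDerivWithinAt_id x _).sub_const 1
    have hder := (((hw.mul (h0.mul h0)).const_mul lamsq).sub
        ((((hw.mul h1).mul h3).mul_const 2).sub (((h1.mul h2).mul_const 2)) |>.sub
          (hw.mul (h2.mul h2)))).add
      (((((hw.mul h1).mul h5).mul_const 2).sub ((h1.mul h4).mul_const 2) |>.sub
          (((hw.mul h2).mul h4).mul_const 2) |>.add ((h2.mul h3).mul_const 4) |>.add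
          (hw.mul (h3.mul h3))).const_mul ζ)
    refine hder.congr_deriv ?_
    simp only [Pi.mul_apply]
    linear_combination (-(2 * (x - 1) * Dv 1 φ x)) * heq x hx
  have E2 := ftc01 hG2d (by
    apply ContinuousOn.add
    apply ContinuousOn.add
    · exact continuousOn_const.mul (hφc.pow 2)
    · exact continuousOn_const.mul ((hC 2 (by norm_num)).pow 2)
    · exact continuousOn_const.mul ((hC 3 (by norm_num)).pow 2))
  have hG2val : G2 1 - G2 0 = ζ * (Dv 3 φ 0)^2 := by
    simp only [hG2]
    rw [hb0, hb1, hb2, h31, h51]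
    linear_combination (2 * Dv 1 φ 1) * hb3
  rw [hG2val] at E2
  -- split the integrals
  have i0 : IntervalIntegrable (fun x => (φ x)^2) volume 0 1 := intInt01 (hφc.pow 2)
  have i2 : IntervalIntegrable (fun x => (Dv 2 φ x)^2) volume 0 1 :=
    intInt01 ((hC 2 (by norm_num)).pow 2)
  have i3 : IntervalIntegrable (fun x => (Dv 3 φ x)^2) volume 0 1 :=
    intInt01 ((hC 3 (by norm_num)).pow 2)
  have key1 : lamsq * (∫ x in (0:ℝ)..1, (φ x)^2) - (∫ x in (0:ℝ)..1, (Dv 2 φ x)^2) -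
      ζ * (∫ x in (0:ℝ)..1, (Dv 3 φ x)^2) = 0 := by
    rw [← intervalIntegral.integral_const_mul, ← intervalIntegral.integral_const_mul, ← integral_sub (i0.const_mul lamsq) i2,
      ← integral_sub ((i0.const_mul lamsq).sub i2) (i3.const_mul ζ)]
    exact E1
  have key2 : lamsq * (∫ x in (0:ℝ)..1, (φ x)^2) + 3 * (∫ x in (0:ℝ)..1, (Dv 2 φ x)^2) +
      5 * ζ * (∫ x in (0:ℝ)..1, (Dv 3 φ x)^2) = ζ * (Dv 3 φ 0)^2 := by
    rw [← intervalIntegral.integral_const_mul, ← intervalIntegral.integral_const_mul, ← intervalIntegral.integral_const_mul,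
      ← integral_add (i0.const_mul lamsq) (i2.const_mul 3),
      ← integral_add ((i0.const_mul lamsq).add (i2.const_mul 3)) (i3.const_mul (5 * ζ))]
    exact E2
  have hA : 0 ≤ ∫ x in (0:ℝ)..1, (Dv 2 φ x)^2 :=
    integral_nonneg zero_le_one (fun x _ => sq_nonneg _)
  have hB : 0 ≤ ∫ x in (0:ℝ)..1, (Dv 3 φ x)^2 :=
    integral_nonneg zero_le_one (fun x _ => sq_nonneg _)
  constructor <;> nlinarith [mul_nonneg hζ.le hB]
end

section
/- Let ζ > 0, let λ > 0, and let (λ², φ) be an eigenpair of the beam problem normalized so that ∫₀¹ (φ(x))² dx = 1. Then the quantity |C₃ψ|² := ζ² (φ‴(0))² / (2λ²), which is the squared modulus of the image of the corresponding normalized eigenvector of the state operator under the non-classical-moment observation operator, satisfies 2ζ ≤ ζ² (φ‴(0))² / (2λ²) ≤ 3ζ; equivalently, √(2ζ) ≤ |C₃ψ| ≤ √(3ζ). -/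
open Set MeasureTheory intervalIntegral

lemma ftc_aux (F g : ℝ → ℝ) (hc : ContinuousOn F (Icc (0:ℝ) 1))
    (hd : ∀ x ∈ Ioo (0:ℝ) 1, HasDerivAt F (g x) x)
    (hi : IntervalIntegrable g volume (0:ℝ) 1) :
    ∫ x in (0:ℝ)..1, g x = F 1 - F 0 :=
  intervalIntegral.integral_eq_sub_of_hasDeriv_right_of_le (by norm_num) hc
    (fun x hx => (hd x hx).hasDerivWithinAt) hi

theorem stmt_13_core (ζ : ℝ) (hζ : 0 < ζ) (lam : ℝ) (hlam : 0 < lam) (φ : ℝ → ℝ)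
    (h : BeamEigenpair ζ (lam^2) φ)
    (hnorm : ∫ x in (0:ℝ)..1, (φ x)^2 = 1) :
    4 * lam^2 ≤ ζ * (Dv 3 φ 0)^2 ∧ ζ * (Dv 3 φ 0)^2 ≤ 6 * lam^2 := by
  obtain ⟨hφ, ⟨hb0, hb1, hb2, hb4, hb5, hb3⟩, -, hode⟩ := h
  have hs : UniqueDiffOn ℝ (Icc (0:ℝ) 1) := uniqueDiffOn_Icc one_pos
  have hDv0 : Dv 0 φ = φ := funext fun x => by simp [Dv]
  have hcont : ∀ m : ℕ, (m:ℕ) ≤ 6 → ContinuousOn (Dv m φ) (Icc (0:ℝ) 1) := by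
    intro m hm
    exact hφ.continuousOn_iteratedDerivWithin (by exact_mod_cast hm) hs
  have hcφ : ContinuousOn φ (Icc (0:ℝ) 1) := hDv0 ▸ hcont 0 (by norm_num)
  have hderiv : ∀ m : ℕ, m < 6 → ∀ x ∈ Ioo (0:ℝ) 1,
      HasDerivAt (Dv m φ) (Dv (m+1) φ x) x := by
    intro m hm x hx
    have hxs : x ∈ Icc (0:ℝ) 1 := Ioo_subset_Icc_self hx
    have hdiff := hφ.differentiableOn_iteratedDerivWithin (m := m) (by exact_mod_cast hm) hs
    have h1 : HasDerivWithinAt (Dv m φ)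
        (derivWithin (iteratedDerivWithin m φ (Icc (0:ℝ) 1)) (Icc (0:ℝ) 1) x)
        (Icc (0:ℝ) 1) x := (hdiff x hxs).hasDerivWithinAt
    rw [← iteratedDerivWithin_succ] at h1
    exact h1.hasDerivAt (Icc_mem_nhds hx.1 hx.2)
  have hode' : ∀ x ∈ Ioo (0:ℝ) 1, Dv 4 φ x - ζ * Dv 6 φ x = lam^2 * φ x :=
    fun x hx => hode x (Ioo_subset_Icc_self hx)
  have e31 : Dv 3 φ 1 = 0 := by
    rcases mul_eq_zero.mp hb3 with hh | hh
    · exact absurd hh hζ.ne'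
    · exact hh
  have e51 : Dv 5 φ 1 = 0 := by
    have hz : ζ * Dv 5 φ 1 = 0 := by linarith
    rcases mul_eq_zero.mp hz with hh | hh
    · exact absurd hh hζ.ne'
    · exact hh
  have hint : ∀ m : ℕ, m ≤ 6 →
      IntervalIntegrable (fun x => (Dv m φ x)^2) volume (0:ℝ) 1 := by
    intro m hm
    apply ContinuousOn.intervalIntegrable
    rw [uIcc_of_le (by norm_num)]
    exact (hcont m hm).pow 2
  have hintφ : IntervalIntegrable (fun x => (φ x)^2) volume (0:ℝ) 1 := by
    apply ContinuousOn.intervalIntegrable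
    rw [uIcc_of_le (by norm_num)]
    exact hcφ.pow 2
  set A := ∫ x in (0:ℝ)..1, (Dv 2 φ x)^2 with hA
  set C := ∫ x in (0:ℝ)..1, (Dv 3 φ x)^2 with hC
  have hA0 : 0 ≤ A := intervalIntegral.integral_nonneg (by norm_num)
    (fun x _ => sq_nonneg _)
  have hC0 : 0 ≤ C := intervalIntegral.integral_nonneg (by norm_num)
    (fun x _ => sq_nonneg _)
  -- Identity 1 :  A + ζ C = lam²
  have key1 : A + ζ * C = lam^2 := by
    have ftc := ftc_aux
      (fun y => Dv 3 φ y * φ y - Dv 2 φ y * Dv 1 φ y -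
        ζ * (Dv 5 φ y * φ y - Dv 4 φ y * Dv 1 φ y + Dv 3 φ y * Dv 2 φ y))
      (fun x => lam^2 * (φ x)^2 - (Dv 2 φ x)^2 - ζ * (Dv 3 φ x)^2)
      (by
        apply ContinuousOn.sub
        apply ContinuousOn.sub
        · exact (hcont 3 (by norm_num)).mul hcφ
        · exact (hcont 2 (by norm_num)).mul (hcont 1 (by norm_num))
        · exact continuousOn_const.mul ((((hcont 5 (by norm_num)).mul hcφ).sub
            ((hcont 4 (by norm_num)).mul (hcont 1 (by norm_num)))).add
            ((hcont 3 (by norm_num)).mul (hcont 2 (by norm_num)))))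
      (by
        intro x hx
        have e0 : HasDerivAt φ (Dv 1 φ x) x := hDv0 ▸ hderiv 0 (by norm_num) x hx
        have e1 := hderiv 1 (by norm_num) x hx
        have e2 := hderiv 2 (by norm_num) x hx
        have e3 := hderiv 3 (by norm_num) x hx
        have e4 := hderiv 4 (by norm_num) x hx
        have e5 := hderiv 5 (by norm_num) x hx
        have big := ((e3.mul e0).sub (e2.mul e1)).sub
          ((((e5.mul e0).sub (e4.mul e1)).add (e3.mul e2)).const_mul ζ)
        refine big.congr_deriv ?_
        linear_combination (φ x) * hode' x hx)
      (((hintφ.const_mul (lam^2)).sub (hint 2 (by norm_num))).sub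
        ((hint 3 (by norm_num)).const_mul ζ))
    rw [hb0, hb1, hb2, e31, e51] at ftc
    rw [intervalIntegral.integral_sub ((hintφ.const_mul (lam^2)).sub
        (hint 2 (by norm_num))) ((hint 3 (by norm_num)).const_mul ζ),
      intervalIntegral.integral_sub (hintφ.const_mul (lam^2)) (hint 2 (by norm_num)),
      intervalIntegral.integral_const_mul, intervalIntegral.integral_const_mul, hnorm] at ftc
    rw [← hA, ← hC] at ftc
    linear_combination -ftc + (Dv 1 φ 1) * hb4
  -- Identity 2 :  3 A + 5 ζ C + lam² = ζ (Dv 3 φ 0)²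
  have key2 : 3 * A + 5 * (ζ * C) + lam^2 = ζ * (Dv 3 φ 0)^2 := by
    have ftc := ftc_aux
      (fun y => (y-1) * (Dv 1 φ y * Dv 3 φ y) - Dv 1 φ y * Dv 2 φ y -
        (y-1) * (Dv 2 φ y * Dv 2 φ y) / 2 -
        ζ * ((y-1) * (Dv 1 φ y * Dv 5 φ y - Dv 2 φ y * Dv 4 φ y +
          Dv 3 φ y * Dv 3 φ y / 2) - Dv 1 φ y * Dv 4 φ y + 2 * (Dv 2 φ y * Dv 3 φ y)) -
        lam^2 * ((y-1) * (φ y * φ y)) / 2)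
      (fun x => (-(3/2)) * (Dv 2 φ x)^2 - 5/2 * (ζ * (Dv 3 φ x)^2) - lam^2/2 * (φ x)^2)
      (by
        have hlin : ContinuousOn (fun y : ℝ => y - 1) (Icc (0:ℝ) 1) :=
          continuousOn_id.sub continuousOn_const
        apply ContinuousOn.sub
        apply ContinuousOn.sub
        apply ContinuousOn.sub
        apply ContinuousOn.sub
        · exact hlin.mul ((hcont 1 (by norm_num)).mul (hcont 3 (by norm_num)))
        · exact (hcont 1 (by norm_num)).mul (hcont 2 (by norm_num))
        · exact (hlin.mul ((hcont 2 (by norm_num)).mul (hcont 2 (by norm_num)))).div_const 2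
        · exact continuousOn_const.mul (((hlin.mul ((((hcont 1 (by norm_num)).mul
            (hcont 5 (by norm_num))).sub ((hcont 2 (by norm_num)).mul
            (hcont 4 (by norm_num)))).add (((hcont 3 (by norm_num)).mul
            (hcont 3 (by norm_num))).div_const 2))).sub ((hcont 1 (by norm_num)).mul
            (hcont 4 (by norm_num)))).add (continuousOn_const.mul
            ((hcont 2 (by norm_num)).mul (hcont 3 (by norm_num)))))
        · exact (continuousOn_const.mul (hlin.mul (hcφ.mul hcφ))).div_const 2)
      (by
        intro x hx
        have e0 : HasDerivAt φ (Dv 1 φ x) x := hDv0 ▸ hderiv 0 (by norm_num) x hx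
        have e1 := hderiv 1 (by norm_num) x hx
        have e2 := hderiv 2 (by norm_num) x hx
        have e3 := hderiv 3 (by norm_num) x hx
        have e4 := hderiv 4 (by norm_num) x hx
        have e5 := hderiv 5 (by norm_num) x hx
        have hid : HasDerivAt (fun y : ℝ => y - 1) 1 x := (hasDerivAt_id x).sub_const 1
        have b1 := (hid.mul (e1.mul e3)).sub (e1.mul e2)
        have b2 := b1.sub ((hid.mul (e2.mul e2)).div_const 2)
        have b3 := ((hid.mul (((e1.mul e5).sub (e2.mul e4)).add
          ((e3.mul e3).div_const 2))).sub (e1.mul e4)).add ((e2.mul e3).const_mul 2)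
        have b4 := b2.sub (b3.const_mul ζ)
        have big := b4.sub (((hid.mul (e0.mul e0)).const_mul (lam^2)).div_const 2)
        refine big.congr_deriv ?_
        simp only [Pi.mul_apply, Pi.add_apply, Pi.sub_apply]
        linear_combination ((x - 1) * Dv 1 φ x) * hode' x hx)
      ((((hint 2 (by norm_num)).const_mul (-(3/2))).sub
        (((hint 3 (by norm_num)).const_mul ζ).const_mul (5/2))).sub
        (hintφ.const_mul (lam^2/2)))
    rw [hb0, hb1, hb2, e31, e51] at ftc
    rw [intervalIntegral.integral_sub (((hint 2 (by norm_num)).const_mul (-(3/2))).sub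
        (((hint 3 (by norm_num)).const_mul ζ).const_mul (5/2)))
        (hintφ.const_mul (lam^2/2)),
      intervalIntegral.integral_sub ((hint 2 (by norm_num)).const_mul (-(3/2)))
        (((hint 3 (by norm_num)).const_mul ζ).const_mul (5/2)),
      intervalIntegral.integral_const_mul, intervalIntegral.integral_const_mul,
      intervalIntegral.integral_const_mul, intervalIntegral.integral_const_mul,
      hnorm] at ftc
    rw [← hA, ← hC] at ftc
    linear_combination (-2 : ℝ) * ftc + (2 * Dv 1 φ 1) * hb4
  constructor
  · nlinarith [mul_nonneg hζ.le hC0]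
  · nlinarith [mul_nonneg hζ.le hC0]

/-- For a normalized eigenpair `(λ², φ)` of the beam problem with `λ > 0`, the
squared modulus `|C₃ψ|² = ζ² (φ‴(0))² / (2λ²)` of the image of the normalized
eigenvector under the non-classical-moment observation operator satisfies
`2ζ ≤ |C₃ψ|² ≤ 3ζ`; equivalently `√(2ζ) ≤ |C₃ψ| ≤ √(3ζ)`. -/
theorem stmt_13 (ζ : ℝ) (hζ : 0 < ζ) (lam : ℝ) (hlam : 0 < lam) (φ : ℝ → ℝ)
    (h : BeamEigenpair ζ (lam^2) φ)
    (hnorm : ∫ x in (0:ℝ)..1, (φ x)^2 = 1) :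
    (2 * ζ ≤ ζ^2 * (Dv 3 φ 0)^2 / (2 * lam^2) ∧
      ζ^2 * (Dv 3 φ 0)^2 / (2 * lam^2) ≤ 3 * ζ) ∧
    (Real.sqrt (2 * ζ) ≤ Real.sqrt (ζ^2 * (Dv 3 φ 0)^2 / (2 * lam^2)) ∧
      Real.sqrt (ζ^2 * (Dv 3 φ 0)^2 / (2 * lam^2)) ≤ Real.sqrt (3 * ζ)) := by
  obtain ⟨h1, h2⟩ := stmt_13_core ζ hζ lam hlam φ h hnorm
  have hl2 : (0:ℝ) < 2 * lam^2 := by positivity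
  have hlow : 2 * ζ ≤ ζ^2 * (Dv 3 φ 0)^2 / (2 * lam^2) := by
    rw [le_div_iff₀ hl2]; nlinarith
  have hhigh : ζ^2 * (Dv 3 φ 0)^2 / (2 * lam^2) ≤ 3 * ζ := by
    rw [div_le_iff₀ hl2]; nlinarith
  exact ⟨⟨hlow, hhigh⟩, Real.sqrt_le_sqrt hlow, Real.sqrt_le_sqrt hhigh⟩
end
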